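/- arXiv:2402.04675 — 3 statements merged into one kernel-verified Lean document; each statement's English description precedes it below -/
import Mathlib

section
/- (ABP lower contact set inclusion) Let E ⊂ {x_n > 0} be a bounded connected open set with ∂E \ {x_n ≤ 0} a smooth hypersurface meeting {x_n = 0} orthogonally, and let u ∈ C¹(Ē) ∩ C^∞(E) solve Δu = P_λ(E)/|E| in E, ∂u/∂ν = 1 on ∂E ∩ {x_n > 0}, ∂u/∂ν = -λ on ∂E ∩ {x_n = 0}. Then B^λ ⊂ ∇u(Γ_u), where Γ_u = {x ∈ E : u(y) ≥ u(x) + ⟨∇u(x), y-x⟩ for all y ∈ Ē} is the lower contact set. -/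
open MeasureTheory Metric Set Filter Topology
open scoped ENNReal NNReal RealInnerProductSpace symmDiff

noncomputable section

/-- Euclidean `n`-space. -/
abbrev V (n : ℕ) : Type := EuclideanSpace ℝ (Fin n)

/-- The index of the last coordinate. -/
def lastIdx (n : ℕ) [NeZero n] : Fin n :=
  ⟨n - 1, Nat.sub_lt (Nat.pos_of_ne_zero (NeZero.ne n)) Nat.one_pos⟩

/-- The last standard basis vector `e_n`. -/
def eN (n : ℕ) [NeZero n] : V n := EuclideanSpace.single (lastIdx n) (1 : ℝ)

/-- The open upper half-space `{x_n > 0}`. -/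
def upperHalf (n : ℕ) [NeZero n] : Set (V n) := {x | 0 < x (lastIdx n)}

/-- The boundary hyperplane `{x_n = 0}`. -/
def hyp (n : ℕ) [NeZero n] : Set (V n) := {x | x (lastIdx n) = 0}

/-- Divergence of a vector field. -/
def vdiv {n : ℕ} (T : V n → V n) (x : V n) : ℝ :=
  LinearMap.trace ℝ (V n) (fderiv ℝ T x : V n →ₗ[ℝ] V n)

/-- Relative perimeter of `E` in `A`, via the variational (De Giorgi) definition. -/
def relPer {n : ℕ} (E A : Set (V n)) : ℝ≥0∞ :=
  ⨆ (T : V n → V n) (_ : ContDiff ℝ 1 T ∧ HasCompactSupport T ∧ tsupport T ⊆ A ∧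
      ∀ x, ‖T x‖ ≤ 1), ENNReal.ofReal (∫ x in E, vdiv T x)

/-- Total perimeter of a set in `ℝⁿ`. -/
def per {n : ℕ} (E : Set (V n)) : ℝ≥0∞ := relPer E Set.univ

/-- The reduced (essential) boundary of a set: points of Lebesgue density neither `0` nor `1`
(this coincides with the reduced boundary up to `H^{n-1}`-negligible sets). -/
def redBdry {n : ℕ} (E : Set (V n)) : Set (V n) :=
  {x | ¬ Tendsto (fun r : ℝ => volume (E ∩ ball x r) / volume (ball x r))
        (nhdsWithin (0 : ℝ) (Set.Ioi 0)) (nhds (0 : ℝ≥0∞)) ∧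
      ¬ Tendsto (fun r : ℝ => volume (E ∩ ball x r) / volume (ball x r))
        (nhdsWithin (0 : ℝ) (Set.Ioi 0)) (nhds (1 : ℝ≥0∞))}

/-- `ν` is the (measure-theoretic) outer unit normal of `E` at `x`: the blow-ups of `E`
at `x` converge to the half-space `{⟨y - x, ν⟩ < 0}`. -/
def IsOuterNormal {n : ℕ} (E : Set (V n)) (x ν : V n) : Prop :=
  ‖ν‖ = 1 ∧ Tendsto (fun r : ℝ =>
      volume ((E ∆ {y : V n | ⟪y - x, ν⟫ < 0}) ∩ ball x r) / volume (ball x r))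
    (nhdsWithin (0 : ℝ) (Set.Ioi 0)) (nhds (0 : ℝ≥0∞))

/-- The wetted region measure `H^{n-1}(∂*E ∩ {x_n = 0})`. -/
def wetted (n : ℕ) [NeZero n] (E : Set (V n)) : ℝ≥0∞ :=
  μH[(n : ℝ) - 1] (redBdry E ∩ hyp n)

/-- The capillarity perimeter `P_λ(E) = P(E, {x_n>0}) - λ H^{n-1}(∂*E ∩ {x_n=0})`. -/
def Pl (n : ℕ) [NeZero n] (lam : ℝ) (E : Set (V n)) : ℝ :=
  (relPer E (upperHalf n)).toReal - lam * (wetted n E).toReal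

/-- The truncated unit ball `B^λ = {x ∈ B_1(0) : x_n > λ}`. -/
def Bl (n : ℕ) [NeZero n] (lam : ℝ) : Set (V n) :=
  {x | x ∈ ball (0 : V n) 1 ∧ lam < x (lastIdx n)}

/-- The volume `|B^λ|`. -/
def BlVol (n : ℕ) [NeZero n] (lam : ℝ) : ℝ := (volume (Bl n lam)).toReal

/-- The optimal bubble `B^λ(v) = (v/|B^λ|)^{1/n} (B^λ - λ e_n)` of volume `v`. -/
def bubble (n : ℕ) [NeZero n] (lam v : ℝ) : Set (V n) :=
  (fun x => (v / BlVol n lam) ^ ((1 : ℝ) / n) • (x - lam • eN n)) '' Bl n lam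

/-- The translated bubble `B^λ(v, y)`. -/
def bubbleAt (n : ℕ) [NeZero n] (lam v : ℝ) (y : V n) : Set (V n) :=
  (fun x => x + y) '' bubble n lam v

/-- The value `P_λ(B^λ(v)) = n |B^λ|^{1/n} v^{(n-1)/n}`. -/
def PlBub (n : ℕ) [NeZero n] (lam v : ℝ) : ℝ :=
  n * BlVol n lam ^ ((1 : ℝ) / n) * v ^ (((n : ℝ) - 1) / n)

/-- The isoperimetric deficit `D_λ`. -/
def deficit (n : ℕ) [NeZero n] (lam : ℝ) (E : Set (V n)) : ℝ :=
  (Pl n lam E - PlBub n lam (volume E).toReal) / PlBub n lam (volume E).toReal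

/-- The Fraenkel asymmetry `α_λ`. -/
def asym (n : ℕ) [NeZero n] (lam : ℝ) (E : Set (V n)) : ℝ :=
  ⨅ y : hyp n,
    (volume (E ∆ bubbleAt n lam (volume E).toReal (y : V n))).toReal / (volume E).toReal

end
/-- If `f` has derivative `L` at `x` and `f x ≤ f (x + t • v)` for all small `t > 0`,
then the directional derivative `L v` is nonnegative. -/
lemma dir_deriv_nonneg {F : Type*} [NormedAddCommGroup F] [NormedSpace ℝ F]
    {f : F → ℝ} {L : F →L[ℝ] ℝ} {x : F} (hL : HasFDerivAt f L x) (v : F)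
    {ε : ℝ} (hε : 0 < ε) (h : ∀ t ∈ Set.Ioo (0:ℝ) ε, f x ≤ f (x + t • v)) :
    0 ≤ L v := by
  have hline : HasDerivAt (fun t : ℝ => x + t • v) v 0 := by
    simpa using ((hasDerivAt_id (0:ℝ)).smul_const v).const_add x
  have hL' : HasFDerivAt f L ((fun t : ℝ => x + t • v) 0) := by simpa using hL
  have hg : HasDerivAt (fun t : ℝ => f (x + t • v)) (L v) 0 := by
    exact hL'.comp_hasDerivAt 0 hline
  have hslope := hasDerivAt_iff_tendsto_slope.1 hg
  have h2 : Tendsto (slope (fun t : ℝ => f (x + t • v)) 0) (𝓝[>] (0:ℝ)) (𝓝 (L v)) :=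
    hslope.mono_left (nhdsWithin_mono _ (fun t ht => ne_of_gt ht))
  refine ge_of_tendsto h2 ?_
  filter_upwards [Ioo_mem_nhdsGT_of_mem (⟨le_refl 0, hε⟩ : (0:ℝ) ∈ Set.Ico 0 ε)] with t ht
  rw [slope_def_field]
  apply div_nonneg
  · simp only [zero_smul, add_zero]
    exact sub_nonneg.2 (h t ht)
  · simpa using ht.1.le

/-- (ABP lower contact set inclusion) If `E ⊆ {x_n > 0}` is a bounded connected
open set whose relative boundary is smooth and meets `{x_n = 0}` orthogonally, and
`u ∈ C¹(closure E) ∩ C^∞(E)` solves the Neumann problem `Δu = P_λ(E)/|E|` in `E`,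
`∂u/∂ν = 1` on `∂E ∩ {x_n > 0}`, `∂u/∂ν = -λ` on `∂E ∩ {x_n = 0}`,
then `B^λ ⊆ ∇u(Γ_u)` where `Γ_u` is the lower contact set of `u`. -/
theorem abp_contact_set_inclusion (n : ℕ) [NeZero n] (hn : 2 ≤ n)
    (lam : ℝ) (hlam : lam ∈ Set.Ioo (-1 : ℝ) 1)
    (E : Set (V n)) (hEopen : IsOpen E) (hEconn : IsConnected E)
    (hEbdd : Bornology.IsBounded E) (hEsub : E ⊆ upperHalf n)
    (u : V n → ℝ) (ν : V n → V n)
    -- `u ∈ C^∞(E)`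
    (husmooth : ∀ k : ℕ, ContDiffOn ℝ k u E)
    -- `u ∈ C¹(closure E)`
    (hudiff : ∀ x ∈ closure E, DifferentiableAt ℝ u x)
    (hugrad : ContinuousOn (gradient u) (closure E))
    -- `ν` is the outward unit normal of `E` along its boundary
    (hν : ∀ x ∈ frontier E, ‖ν x‖ = 1 ∧
      ∃ ε > 0, ∀ t ∈ Set.Ioo (0 : ℝ) ε, x + t • ν x ∉ closure E ∧ x - t • ν x ∈ E)
    -- the relative boundary meets `{x_n = 0}` orthogonally
    (horth : ∀ x ∈ closure (frontier E ∩ upperHalf n) ∩ hyp n, ⟪ν x, eN n⟫ = 0)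
    -- `Δ u = P_λ(E)/|E|` in `E`
    (hpde : ∀ x ∈ E, vdiv (gradient u) x = Pl n lam E / (volume E).toReal)
    -- `∂u/∂ν = 1` on `∂E ∩ {x_n > 0}`
    (hneu₁ : ∀ x ∈ frontier E ∩ upperHalf n, ⟪gradient u x, ν x⟫ = 1)
    -- `∂u/∂ν = -λ` on `∂E ∩ {x_n = 0}` (the outer normal there being `-e_n`)
    (hneu₂ : ∀ x ∈ frontier E ∩ hyp n, ⟪gradient u x, -eN n⟫ = -lam) :
    Bl n lam ⊆ gradient u ''
      {x ∈ E | ∀ y ∈ closure E, u x + ⟪gradient u x, y - x⟫ ≤ u y} := by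
  intro p hp
  obtain ⟨hp1, hp2⟩ := hp
  have hpnorm : ‖p‖ < 1 := by simpa using mem_ball_zero_iff.1 hp1
  have hEne : E.Nonempty := hEconn.nonempty
  have hclne : (closure E).Nonempty := hEne.closure
  have hcomp : IsCompact (closure E) := hEbdd.isCompact_closure
  set f : V n → ℝ := fun y => u y - ⟪p, y⟫ with hfdef
  have hfcont : ContinuousOn f (closure E) := by
    apply ContinuousOn.sub
    · exact fun x hx => (hudiff x hx).continuousAt.continuousWithinAt
    · exact (continuous_const.inner continuous_id).continuousOn
  obtain ⟨x₀, hx₀, hminOn⟩ := hcomp.exists_isMinOn hclne hfcont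
  have hmin : ∀ y ∈ closure E, f x₀ ≤ f y := fun y hy => hminOn hy
  -- derivative of f at points of closure E
  have hgradf : ∀ x ∈ closure E,
      HasFDerivAt f ((InnerProductSpace.toDual ℝ (V n)) (gradient u x - p)) x := by
    intro x hx
    have h1 : HasFDerivAt u ((InnerProductSpace.toDual ℝ (V n)) (gradient u x)) x :=
      (hudiff x hx).hasGradientAt.hasFDerivAt
    have h2 : HasFDerivAt (fun y : V n => ⟪p, y⟫)
        ((InnerProductSpace.toDual ℝ (V n)) p) x := by
      have := ((InnerProductSpace.toDual ℝ (V n)) p).hasFDerivAt (x := x)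
      exact this
    have := h1.sub h2
    rw [map_sub]; exact this
  -- directional derivative inequality at the minimum point
  have key : ∀ v : V n, ∀ ε > (0:ℝ), (∀ t ∈ Set.Ioo (0:ℝ) ε, x₀ + t • v ∈ closure E) →
      ⟪p, v⟫ ≤ ⟪gradient u x₀, v⟫ := by
    intro v ε hε hmem
    have h0 := dir_deriv_nonneg (hgradf x₀ hx₀) v hε
      (fun t ht => hmin _ (hmem t ht))
    rw [InnerProductSpace.toDual_apply_apply, inner_sub_left] at h0
    linarith
  -- coordinates are nonnegative on closure E
  have hclsub : ∀ x ∈ closure E, 0 ≤ x (lastIdx n) := by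
    intro x hx
    have hcont : Continuous fun x : V n => x (lastIdx n) :=
      (EuclideanSpace.proj (lastIdx n) : V n →L[ℝ] ℝ).continuous
    have hcl : IsClosed {x : V n | 0 ≤ x (lastIdx n)} := isClosed_le continuous_const hcont
    have hsub2 : closure E ⊆ {x : V n | 0 ≤ x (lastIdx n)} :=
      closure_minimal (fun y hy => le_of_lt (show (0:ℝ) < y (lastIdx n) from hEsub hy)) hcl
    exact hsub2 hx
  by_cases hx₀E : x₀ ∈ E
  · -- interior minimum: p = ∇u(x₀) and x₀ is a lower contact point
    have hloc : IsLocalMin f x₀ := by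
      filter_upwards [hEopen.mem_nhds hx₀E] with y hy
      exact hmin y (subset_closure hy)
    have hz := hloc.hasFDerivAt_eq_zero (hgradf x₀ hx₀)
    have hgp : gradient u x₀ = p := by
      have h1 : (InnerProductSpace.toDual ℝ (V n)) (gradient u x₀ - p)
          = (InnerProductSpace.toDual ℝ (V n)) 0 := by rw [hz, map_zero]
      exact sub_eq_zero.1 ((InnerProductSpace.toDual ℝ (V n)).injective h1)
    refine ⟨x₀, ⟨hx₀E, ?_⟩, hgp⟩
    intro y hy
    have h1 := hmin y hy
    have h2 : ⟪gradient u x₀, y - x₀⟫ = ⟪p, y⟫ - ⟪p, x₀⟫ := by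
      rw [hgp, inner_sub_right]
    simp only [hfdef] at h1
    linarith
  · -- boundary minimum: contradiction
    exfalso
    have hfr : x₀ ∈ frontier E := by
      rw [frontier, hEopen.interior_eq]; exact ⟨hx₀, hx₀E⟩
    obtain ⟨hνnorm, ε, hε, hεprop⟩ := hν x₀ hfr
    -- derivative along the inward normal
    have hdir : ⟪gradient u x₀, ν x₀⟫ ≤ ⟪p, ν x₀⟫ := by
      have := key (-ν x₀) ε hε (fun t ht => by
        have := (hεprop t ht).2
        rw [smul_neg, ← sub_eq_add_neg]
        exact subset_closure this)
      rw [inner_neg_right, inner_neg_right] at this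
      linarith
    rcases (hclsub x₀ hx₀).lt_or_eq with hx0pos | hx0eq
    · -- minimum on ∂E ∩ {x_n > 0}: contradicts |p| < 1
      have h1 := hneu₁ x₀ ⟨hfr, hx0pos⟩
      have h2 := real_inner_le_norm p (ν x₀)
      rw [hνnorm, mul_one] at h2
      linarith
    · -- minimum on ∂E ∩ {x_n = 0}
      have hx0eq : x₀ (lastIdx n) = 0 := hx0eq.symm
      have hlam2 : ⟪gradient u x₀, eN n⟫ = lam := by
        have := hneu₂ x₀ ⟨hfr, hx0eq⟩
        rw [inner_neg_right] at this
        linarith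
      -- the normal at x₀ points strictly downwards
      have hνneg : ν x₀ (lastIdx n) < 0 := by
        have hq : x₀ - (ε/2) • ν x₀ ∈ E := (hεprop (ε/2) ⟨by linarith, by linarith⟩).2
        have := hEsub hq
        simp only [upperHalf, mem_setOf_eq, PiLp.sub_apply, PiLp.smul_apply,
          smul_eq_mul, hx0eq] at this
        nlinarith
      by_cases hcl : x₀ ∈ closure (frontier E ∩ upperHalf n)
      · -- contradicts the orthogonality assumption
        have h0 := horth x₀ ⟨hcl, hx0eq⟩
        rw [show eN n = EuclideanSpace.single (lastIdx n) (1:ℝ) from rfl,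
          EuclideanSpace.inner_single_right] at h0
        simp at h0
        linarith
      · -- x₀ is away from ∂E ∩ {x_n > 0}: move vertically into E
        rw [Metric.mem_closure_iff] at hcl
        push_neg at hcl
        obtain ⟨r, hr, hrprop⟩ := hcl
        set s : ℝ := min (ε/2) (r/2) with hs
        have hs0 : 0 < s := lt_min (by linarith) (by linarith)
        have hsε : s < ε := lt_of_le_of_lt (min_le_left _ _) (by linarith)
        have hsr : s < r := lt_of_le_of_lt (min_le_right _ _) (by linarith)
        set q : V n := x₀ - s • ν x₀ with hq
        have hqE : q ∈ E := (hεprop s ⟨hs0, hsε⟩).2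
        have hqball : q ∈ ball x₀ r := by
          rw [mem_ball, dist_eq_norm, hq]
          simp only [sub_sub_cancel_left, norm_neg, norm_smul, hνnorm, mul_one,
            Real.norm_eq_abs, abs_of_pos hs0]
          exact hsr
        have hqn : 0 < q (lastIdx n) := hEsub hqE
        -- vertical segment points belong to E
        have hvert : ∀ t ∈ Set.Ioo (0:ℝ) (r/2), x₀ + t • eN n ∈ closure E := by
          intro t ht
          set z : V n := x₀ + t • eN n with hz
          have hzn : z (lastIdx n) = t := by
            simp [hz, eN, PiLp.add_apply, PiLp.smul_apply, hx0eq,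
              EuclideanSpace.single_apply]
          have hzball : z ∈ ball x₀ r := by
            rw [mem_ball, dist_eq_norm, hz]
            simp only [add_sub_cancel_left, norm_smul, Real.norm_eq_abs,
              abs_of_pos ht.1]
            rw [show eN n = EuclideanSpace.single (lastIdx n) (1:ℝ) from rfl,
              EuclideanSpace.norm_single]
            simp only [norm_one, mul_one]
            linarith [ht.2]
          have hseg : segment ℝ q z ⊆ E ∪ (closure E)ᶜ := by
            intro w hw
            obtain ⟨a, b, ha, hb, hab, hw⟩ := hw
            have hwball : w ∈ ball x₀ r :=
              (convex_ball x₀ r).segment_subset hqball hzball ⟨a, b, ha, hb, hab, hw⟩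
            have hwn : 0 < w (lastIdx n) := by
              have : w (lastIdx n) = a * q (lastIdx n) + b * z (lastIdx n) := by
                rw [← hw]; simp [PiLp.add_apply, PiLp.smul_apply]
              rw [this, hzn]
              rcases eq_or_lt_of_le hb with hb0 | hb0
              · have : a = 1 := by linarith
                rw [this, ← hb0]; simpa using hqn
              · nlinarith [mul_nonneg ha hqn.le, mul_pos hb0 ht.1]
            have hwfr : w ∉ frontier E := by
              intro hwfr
              have := hrprop w ⟨hwfr, hwn⟩
              rw [mem_ball, dist_comm] at hwball
              linarith [this]
            by_cases hwcl : w ∈ closure E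
            · left
              by_contra hwE
              exact hwfr (by rw [frontier, hEopen.interior_eq]; exact ⟨hwcl, hwE⟩)
            · right; exact hwcl
          have hzE : z ∈ E := by
            have hsub2 : segment ℝ q z ⊆ E :=
              (convex_segment q z).isPreconnected.subset_left_of_subset_union
                hEopen isClosed_closure.isOpen_compl
                (disjoint_compl_right.mono_left subset_closure)
                hseg ⟨q, left_mem_segment ℝ q z, hqE⟩
            exact hsub2 (right_mem_segment ℝ q z)
          exact subset_closure hzE
        -- conclude: λ < p_n = ⟪p, e_n⟫ ≤ ⟪∇u(x₀), e_n⟫ = λ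
        have hkey := key (eN n) (r/2) (by linarith) hvert
        have hpen : ⟪p, eN n⟫ = p (lastIdx n) := by
          rw [show eN n = EuclideanSpace.single (lastIdx n) (1:ℝ) from rfl,
            EuclideanSpace.inner_single_right]
          simp
        rw [hpen, hlam2] at hkey
        linarith
end

section
/- (Asymmetry nearly attained at symmetric centers) Let E ⊂ {x_n > 0} be a Borel set with finite measure, symmetric with respect to k ∈ {1,…,n-1} mutually orthogonal hyperplanes H_j = {⟨x, ν_j⟩ = 0} with ⟨ν_j, e_n⟩ = 0. Then min over y ∈ {x_n=0} ∩ ⋂_j H_j of |E Δ B^λ(|E|, y)| is at most 3 times the unrestricted minimum min over x ∈ {x_n=0} of |E Δ B^λ(|E|, x)|. -/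
open MeasureTheory Metric Set Filter Topology
open scoped ENNReal NNReal RealInnerProductSpace symmDiff

noncomputable section AuxAsym
open scoped Pointwise
set_option maxHeartbeats 1000000
set_option linter.unusedSectionVars false

section ConvexTranslate
variable {n : ℕ}

/-- For a convex set, intersecting with a doubled translate has smaller measure. -/
lemma inter_vadd_double_le {s : Set (V n)} (hconv : Convex ℝ s) (a : V n) :
    volume (s ∩ ((a + a) +ᵥ s)) ≤ volume (s ∩ (a +ᵥ s)) := by
  have h1 : volume (s ∩ ((a + a) +ᵥ s)) = volume ((-a) +ᵥ (s ∩ ((a + a) +ᵥ s))) :=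
    (measure_vadd (μ := (volume : Measure (V n))) (-a) _).symm
  rw [h1]
  refine measure_mono ?_
  rintro y ⟨z, ⟨hz1, hz2⟩, rfl⟩
  rw [Set.mem_vadd_set_iff_neg_vadd_mem] at hz2
  constructor
  · have := hconv hz1 hz2 (by norm_num : (0:ℝ) ≤ 1/2) (by norm_num : (0:ℝ) ≤ 1/2) (by norm_num)
    convert this using 1
    simp only [vadd_eq_add, neg_add_rev, smul_add]
    module
  · rw [Set.mem_vadd_set_iff_neg_vadd_mem]
    convert hz2 using 1
    simp only [vadd_eq_add]
    abel

lemma symmDiff_vadd_eq {s : Set (V n)} (hs : MeasurableSet s) (hfin : volume s ≠ ⊤) (a : V n) :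
    volume (s ∆ (a +ᵥ s)) = (volume s - volume (s ∩ (a +ᵥ s)))
      + (volume s - volume (s ∩ (a +ᵥ s))) := by
  have hms : MeasurableSet (a +ᵥ s) := hs.const_vadd a
  have hvol : volume (a +ᵥ s) = volume s := measure_vadd (μ := (volume : Measure (V n))) a s
  have hifin : volume (s ∩ (a +ᵥ s)) ≠ ⊤ :=
    fun h => hfin (top_le_iff.mp (h ▸ measure_mono Set.inter_subset_left))
  have h1 : volume (s \ (a +ᵥ s)) = volume s - volume (s ∩ (a +ᵥ s)) := by
    rw [← Set.diff_self_inter]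
    exact measure_diff Set.inter_subset_left (hs.inter hms).nullMeasurableSet hifin
  have h2 : volume ((a +ᵥ s) \ s) = volume s - volume (s ∩ (a +ᵥ s)) := by
    rw [← Set.diff_self_inter,
      measure_diff Set.inter_subset_left (hms.inter hs).nullMeasurableSet
        (by rwa [Set.inter_comm (a +ᵥ s) s]), hvol, Set.inter_comm (a +ᵥ s) s]
  rw [Set.symmDiff_def, measure_union (disjoint_sdiff_sdiff) (hms.diff hs), h1, h2]

lemma symmDiff_vadd_le {s : Set (V n)} (hs : MeasurableSet s) (hconv : Convex ℝ s)
    (hfin : volume s ≠ ⊤) (a : V n) :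
    volume (s ∆ (a +ᵥ s)) ≤ volume (s ∆ ((a + a) +ᵥ s)) := by
  rw [symmDiff_vadd_eq hs hfin a, symmDiff_vadd_eq hs hfin (a + a)]
  have := inter_vadd_double_le hconv a
  exact add_le_add (tsub_le_tsub_left this _) (tsub_le_tsub_left this _)

end ConvexTranslate

section Refl
variable {n k : ℕ}

/-- Simultaneous reflection across the hyperplanes orthogonal to the `νs j`. -/
def reflMap (νs : Fin k → V n) (x : V n) : V n := x - ∑ j, (2 * ⟪x, νs j⟫) • νs j

variable (νs : Fin k → V n)

lemma inner_self_nu (hunit : ∀ j, ‖νs j‖ = 1) (j : Fin k) : ⟪νs j, νs j⟫ = 1 := by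
  rw [real_inner_self_eq_norm_mul_norm, hunit j]; norm_num

lemma reflMap_inner_nu (hunit : ∀ j, ‖νs j‖ = 1)
    (horth : ∀ i j, i ≠ j → ⟪νs i, νs j⟫ = 0) (x : V n) (i : Fin k) :
    ⟪reflMap νs x, νs i⟫ = -⟪x, νs i⟫ := by
  simp only [reflMap, inner_sub_left, sum_inner, real_inner_smul_left]
  rw [Finset.sum_eq_single i]
  · rw [inner_self_nu νs hunit]; ring
  · intro j _ hji; rw [horth j i hji]; ring
  · intro h; exact absurd (Finset.mem_univ i) h

lemma reflMap_inner_of_orth (x y : V n) (hy : ∀ j, ⟪νs j, y⟫ = 0) :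
    ⟪reflMap νs x, y⟫ = ⟪x, y⟫ := by
  simp only [reflMap, inner_sub_left, sum_inner, real_inner_smul_left]
  rw [Finset.sum_eq_zero (fun j _ => by rw [hy j]; ring), sub_zero]

lemma reflMap_involutive (hunit : ∀ j, ‖νs j‖ = 1)
    (horth : ∀ i j, i ≠ j → ⟪νs i, νs j⟫ = 0) : Function.Involutive (reflMap νs) := by
  intro x
  have h := reflMap_inner_nu νs hunit horth x
  have hsum : ∑ j, (2 * ⟪reflMap νs x, νs j⟫) • νs j
      = -∑ j, (2 * ⟪x, νs j⟫) • νs j := by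
    rw [← Finset.sum_neg_distrib]
    exact Finset.sum_congr rfl fun j _ => by rw [h j]; module
  show reflMap νs x - _ = x
  rw [hsum, reflMap]; abel

lemma reflMap_add (x y : V n) : reflMap νs (x + y) = reflMap νs x + reflMap νs y := by
  simp only [reflMap, inner_add_left, mul_add, add_smul, Finset.sum_add_distrib]
  abel

lemma reflMap_sub (x y : V n) : reflMap νs (x - y) = reflMap νs x - reflMap νs y := by
  simp only [reflMap, inner_sub_left, mul_sub, sub_smul, Finset.sum_sub_distrib]
  abel

lemma reflMap_smul (c : ℝ) (x : V n) : reflMap νs (c • x) = c • reflMap νs x := by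
  simp only [reflMap, real_inner_smul_left, smul_sub, Finset.smul_sum, smul_smul]
  congr 1
  refine Finset.sum_congr rfl fun j _ => ?_
  congr 1; ring

lemma reflMap_expand (x z : V n) :
    ⟪z, reflMap νs x⟫ = ⟪z, x⟫ - ∑ j, 2 * ⟪x, νs j⟫ * ⟪z, νs j⟫ := by
  simp only [reflMap, inner_sub_right, inner_sum, real_inner_smul_right]
  try (congr 1; exact Finset.sum_congr rfl fun j _ => by ring)

lemma reflMap_norm (hunit : ∀ j, ‖νs j‖ = 1)
    (horth : ∀ i j, i ≠ j → ⟪νs i, νs j⟫ = 0) (x : V n) : ‖reflMap νs x‖ = ‖x‖ := by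
  have hRx := reflMap_inner_nu νs hunit horth x
  have key : ⟪reflMap νs x, reflMap νs x⟫ = ⟪x, x⟫ := by
    have h1 : ⟪reflMap νs x, x⟫ = ⟪x, x⟫ - ∑ j, 2 * ⟪x, νs j⟫ * ⟪x, νs j⟫ := by
      rw [real_inner_comm]; exact reflMap_expand νs x x
    rw [reflMap_expand νs x (reflMap νs x), h1]
    rw [show ∑ j, 2 * ⟪x, νs j⟫ * ⟪reflMap νs x, νs j⟫
        = -∑ j, 2 * ⟪x, νs j⟫ * ⟪x, νs j⟫ by
      rw [← Finset.sum_neg_distrib]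
      exact Finset.sum_congr rfl fun j _ => by rw [hRx j]; ring]
    abel
  rw [real_inner_self_eq_norm_mul_norm, real_inner_self_eq_norm_mul_norm] at key
  exact (mul_self_inj (norm_nonneg _) (norm_nonneg _)).mp key

/-- `reflMap` as a linear isometry equivalence. -/
def reflLIE (hunit : ∀ j, ‖νs j‖ = 1)
    (horth : ∀ i j, i ≠ j → ⟪νs i, νs j⟫ = 0) : V n ≃ₗᵢ[ℝ] V n :=
  { LinearEquiv.ofInvolutive
      { toFun := reflMap νs
        map_add' := reflMap_add νs
        map_smul' := reflMap_smul νs } (reflMap_involutive νs hunit horth) with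
    norm_map' := reflMap_norm νs hunit horth }

/-- `reflMap` preserves volume on images. -/
lemma volume_reflMap_image (hunit : ∀ j, ‖νs j‖ = 1)
    (horth : ∀ i j, i ≠ j → ⟪νs i, νs j⟫ = 0) {S : Set (V n)} (hS : MeasurableSet S) :
    volume (reflMap νs '' S) = volume S := by
  have hinv := reflMap_involutive νs hunit horth
  rw [Set.image_eq_preimage_of_inverse hinv.leftInverse hinv.rightInverse]
  exact (reflLIE νs hunit horth).measurePreserving.measure_preimage hS.nullMeasurableSet

/-- Partial reflections fix `E`. -/
lemma reflMap_partial_image (horth : ∀ i j, i ≠ j → ⟪νs i, νs j⟫ = 0)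
    (E : Set (V n)) (hsymm : ∀ j, (fun x : V n => x - (2 * ⟪x, νs j⟫) • νs j) '' E = E)
    (s : Finset (Fin k)) :
    (fun x => x - ∑ j ∈ s, (2 * ⟪x, νs j⟫) • νs j) '' E = E := by
  induction s using Finset.induction_on with
  | empty => simp
  | @insert i s hi ih =>
    have hcomp : (fun x => x - ∑ j ∈ insert i s, (2 * ⟪x, νs j⟫) • νs j)
        = (fun x : V n => x - (2 * ⟪x, νs i⟫) • νs i)
          ∘ (fun x => x - ∑ j ∈ s, (2 * ⟪x, νs j⟫) • νs j) := by
      funext x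
      have hinner : ⟪x - ∑ j ∈ s, (2 * ⟪x, νs j⟫) • νs j, νs i⟫ = ⟪x, νs i⟫ := by
        rw [inner_sub_left, sum_inner,
          Finset.sum_eq_zero (fun j hj => by
            rw [real_inner_smul_left, horth j i (fun h => hi (h ▸ hj))]; ring), sub_zero]
      simp only [Function.comp_apply, hinner, Finset.sum_insert hi]
      abel
    rw [hcomp, Set.image_comp, ih, hsymm i]

lemma reflMap_image_E (horth : ∀ i j, i ≠ j → ⟪νs i, νs j⟫ = 0)
    (E : Set (V n)) (hsymm : ∀ j, (fun x : V n => x - (2 * ⟪x, νs j⟫) • νs j) '' E = E) :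
    reflMap νs '' E = E :=
  reflMap_partial_image νs horth E hsymm Finset.univ

end Refl

section BubbleGeom
variable {n : ℕ} [NeZero n]

lemma inner_eN (x : V n) : ⟪x, eN n⟫ = x (lastIdx n) := by
  simp [eN, EuclideanSpace.inner_single_right]

lemma norm_eN : ‖eN n‖ = 1 := by simp [eN]

lemma isOpen_Bl (lam : ℝ) : IsOpen (Bl n lam) := by
  refine IsOpen.inter isOpen_ball ?_
  have : Continuous fun x : V n => x (lastIdx n) :=
    (continuous_apply (lastIdx n)).comp (PiLp.continuous_ofLp 2 _)
  exact isOpen_lt continuous_const this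

lemma convex_Bl (lam : ℝ) : Convex ℝ (Bl n lam) :=
  (convex_ball 0 1).inter (convex_halfSpace_gt ⟨fun a b => rfl, fun c a => rfl⟩ lam)

lemma Bl_nonempty {lam : ℝ} (hlam : lam ∈ Set.Ioo (-1 : ℝ) 1) : (Bl n lam).Nonempty := by
  refine ⟨((1 + lam) / 2) • eN n, ?_, ?_⟩
  · rw [mem_ball_zero_iff, norm_smul, norm_eN, mul_one, Real.norm_eq_abs, abs_lt]
    constructor <;> nlinarith [hlam.1, hlam.2]
  · have : (((1 + lam) / 2) • eN n) (lastIdx n) = (1 + lam) / 2 := by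
      simp [eN, EuclideanSpace.single_apply, lastIdx]
    rw [this]; linarith [hlam.1, hlam.2]

lemma BlVol_pos {lam : ℝ} (hlam : lam ∈ Set.Ioo (-1 : ℝ) 1) : 0 < BlVol n lam := by
  rw [BlVol]
  refine ENNReal.toReal_pos ?_ ?_
  · exact ((isOpen_Bl lam).measure_pos volume (Bl_nonempty hlam)).ne'
  · exact (lt_of_le_of_lt (measure_mono (fun x hx => hx.1)) measure_ball_lt_top).ne

lemma bubble_eq_smul_vadd (lam v : ℝ) : bubble n lam v
    = (v / BlVol n lam) ^ ((1 : ℝ) / n) • ((-(lam • eN n)) +ᵥ Bl n lam) := by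
  ext z
  simp only [bubble, Set.mem_image, Set.mem_smul_set, Set.mem_vadd_set, sub_eq_neg_add]
  constructor
  · rintro ⟨x, hx, rfl⟩; exact ⟨-(lam • eN n) + x, ⟨x, hx, rfl⟩, rfl⟩
  · rintro ⟨y, ⟨x, hx, rfl⟩, rfl⟩; exact ⟨x, hx, rfl⟩

lemma convex_bubble (lam v : ℝ) : Convex ℝ (bubble n lam v) := by
  rw [bubble_eq_smul_vadd]
  exact ((convex_Bl lam).vadd _).smul _

lemma isOpen_bubble {lam v : ℝ} (hlam : lam ∈ Set.Ioo (-1 : ℝ) 1) (hv : 0 < v) :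
    IsOpen (bubble n lam v) := by
  rw [bubble_eq_smul_vadd]
  exact IsOpen.smul₀ ((isOpen_Bl lam).vadd _)
    (Real.rpow_pos_of_pos (div_pos hv (BlVol_pos hlam)) _).ne'

lemma bubble_fin (lam v : ℝ) : volume (bubble n lam v) ≠ ⊤ := by
  set c := (v / BlVol n lam) ^ ((1 : ℝ) / n) with hc
  have hsub : bubble n lam v ⊆ closedBall 0 (|c| * (1 + |lam|)) := by
    rintro z ⟨x, hx, rfl⟩
    rw [mem_closedBall_zero_iff]
    calc ‖c • (x - lam • eN n)‖ = |c| * ‖x - lam • eN n‖ := by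
          rw [norm_smul, Real.norm_eq_abs]
      _ ≤ |c| * (‖x‖ + ‖lam • eN n‖) := by gcongr; exact norm_sub_le _ _
      _ ≤ |c| * (1 + |lam|) := by
          gcongr
          · exact le_of_lt (mem_ball_zero_iff.mp hx.1)
          · rw [norm_smul, norm_eN, mul_one, Real.norm_eq_abs]
  exact (lt_of_le_of_lt (measure_mono hsub) measure_closedBall_lt_top).ne

lemma bubbleAt_eq_vadd (lam v : ℝ) (y : V n) :
    bubbleAt n lam v y = y +ᵥ bubble n lam v := by
  ext z
  simp only [bubbleAt, Set.mem_image, Set.mem_vadd_set, vadd_eq_add]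
  constructor
  · rintro ⟨a, ha, rfl⟩; exact ⟨a, ha, by rw [add_comm]⟩
  · rintro ⟨a, ha, rfl⟩; exact ⟨a, ha, by rw [add_comm]⟩

lemma vadd_bubbleAt (lam v : ℝ) (a y : V n) :
    a +ᵥ bubbleAt n lam v y = bubbleAt n lam v (y + a) := by
  rw [bubbleAt_eq_vadd, bubbleAt_eq_vadd, vadd_vadd, add_comm a y]

section ReflBubble
variable {k : ℕ} (νs : Fin k → V n) (hunit : ∀ j, ‖νs j‖ = 1)
    (horth : ∀ i j, i ≠ j → ⟪νs i, νs j⟫ = 0) (hperp : ∀ j, ⟪νs j, eN n⟫ = 0)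

include hunit horth hperp in
lemma reflMap_image_Bl (lam : ℝ) : reflMap νs '' Bl n lam = Bl n lam := by
  have hmem : ∀ x, x ∈ Bl n lam → reflMap νs x ∈ Bl n lam := by
    intro x hx
    have hcoord : reflMap νs x (lastIdx n) = x (lastIdx n) := by
      have h := reflMap_inner_of_orth νs x (eN n) hperp
      rw [inner_eN, inner_eN] at h
      exact h
    refine ⟨?_, by rw [hcoord]; exact hx.2⟩
    rw [mem_ball_zero_iff, reflMap_norm νs hunit horth]
    exact mem_ball_zero_iff.mp hx.1
  have hinv := reflMap_involutive νs hunit horth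
  apply Set.Subset.antisymm
  · rintro z ⟨x, hx, rfl⟩; exact hmem x hx
  · intro x hx
    exact ⟨reflMap νs x, hmem x hx, hinv x⟩

include hperp in
lemma reflMap_eN : reflMap νs (eN n) = eN n := by
  rw [reflMap, Finset.sum_eq_zero, sub_zero]
  intro j _
  rw [real_inner_comm, hperp j]
  simp

include hunit horth hperp in
lemma reflMap_image_bubble (lam v : ℝ) :
    reflMap νs '' bubble n lam v = bubble n lam v := by
  have hcomm : (reflMap νs) ∘ (fun x : V n => (v / BlVol n lam) ^ ((1 : ℝ) / n)
      • (x - lam • eN n)) = (fun x : V n => (v / BlVol n lam) ^ ((1 : ℝ) / n)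
      • (x - lam • eN n)) ∘ (reflMap νs) := by
    funext x
    simp only [Function.comp_apply]
    rw [reflMap_smul, reflMap_sub, reflMap_smul, reflMap_eN νs hperp]
  rw [bubble, ← Set.image_comp, hcomm, Set.image_comp, reflMap_image_Bl νs hunit horth hperp]

include hunit horth hperp in
lemma reflMap_image_bubbleAt (lam v : ℝ) (y : V n) :
    reflMap νs '' bubbleAt n lam v y = bubbleAt n lam v (reflMap νs y) := by
  have hcomm : (reflMap νs) ∘ (fun x : V n => x + y)
      = (fun x : V n => x + reflMap νs y) ∘ (reflMap νs) := by
    funext x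
    simp only [Function.comp_apply, reflMap_add]
  rw [bubbleAt, ← Set.image_comp, hcomm, Set.image_comp,
    reflMap_image_bubble νs hunit horth hperp, bubbleAt]

end ReflBubble
end BubbleGeom
end AuxAsym

open scoped Pointwise
set_option maxHeartbeats 1000000

/-- (Asymmetry nearly attained at symmetric centers) If `E` is symmetric with
respect to `k ∈ {1,…,n-1}` mutually orthogonal hyperplanes `{⟨x, ν_j⟩ = 0}` with `ν_j ⊥ e_n`,
then the minimum of `|E Δ B^λ(|E|, y)|` over centers `y` in `{x_n=0} ∩ ⋂_j {⟨·,ν_j⟩=0}` is at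
most three times the unrestricted minimum over `x ∈ {x_n=0}`. -/
theorem asymmetry_symmetric_centers (n : ℕ) [NeZero n] (hn : 2 ≤ n)
    (lam : ℝ) (hlam : lam ∈ Set.Ioo (-1 : ℝ) 1)
    (k : ℕ) (hk₁ : 1 ≤ k) (hk₂ : k ≤ n - 1)
    (νs : Fin k → V n) (hunit : ∀ j, ‖νs j‖ = 1)
    (horth : ∀ i j, i ≠ j → ⟪νs i, νs j⟫ = 0)
    (hperp : ∀ j, ⟪νs j, eN n⟫ = 0)
    (E : Set (V n)) (hE : MeasurableSet E) (hEsub : E ⊆ upperHalf n)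
    (hvol : volume E ≠ ⊤) (hvol0 : 0 < volume E)
    (hsymm : ∀ j, (fun x : V n => x - (2 * ⟪x, νs j⟫) • νs j) '' E = E) :
    (⨅ y : {y : V n // y ∈ hyp n ∧ ∀ j, ⟪y, νs j⟫ = 0},
        volume (E ∆ bubbleAt n lam (volume E).toReal (y : V n)))
      ≤ 3 * ⨅ y : hyp n, volume (E ∆ bubbleAt n lam (volume E).toReal (y : V n)) := by
  have hv : 0 < (volume E).toReal := ENNReal.toReal_pos hvol0.ne' hvol
  set v : ℝ := (volume E).toReal with hvd
  rw [ENNReal.mul_iInf_of_ne (by norm_num) (by norm_num)]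
  refine le_iInf fun xx => ?_
  obtain ⟨x, hx⟩ := xx
  have hx' : x (lastIdx n) = 0 := hx
  set w : V n := -∑ j, ⟪x, νs j⟫ • νs j with hw
  have hw_inner : ∀ i, ⟪w, νs i⟫ = -⟪x, νs i⟫ := by
    intro i
    rw [hw, inner_neg_left, sum_inner,
      Finset.sum_eq_single i (fun j _ hji => by
        rw [real_inner_smul_left, horth j i hji]; ring)
        (fun h => absurd (Finset.mem_univ i) h),
      real_inner_smul_left, inner_self_nu νs hunit, mul_one]
  have hwe : ⟪w, eN n⟫ = 0 := by
    rw [hw, inner_neg_left, sum_inner,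
      Finset.sum_eq_zero (fun j _ => by rw [real_inner_smul_left, hperp j]; ring)]
    simp
  have hpHyp : (x + w) ∈ hyp n := by
    show (x + w) (lastIdx n) = 0
    rw [← inner_eN (x + w), inner_add_left, hwe, inner_eN x, hx', add_zero]
  have hpOrth : ∀ j, ⟪x + w, νs j⟫ = 0 := by
    intro j
    rw [inner_add_left, hw_inner j, add_neg_cancel]
  -- basic facts about the translated bubble at `x`
  have hBeq : bubbleAt n lam v x = x +ᵥ bubble n lam v := bubbleAt_eq_vadd lam v x
  have hBopen : IsOpen (bubbleAt n lam v x) := by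
    rw [hBeq]; exact (isOpen_bubble hlam hv).vadd x
  have hBmeas : MeasurableSet (bubbleAt n lam v x) := hBopen.measurableSet
  have hBconv : Convex ℝ (bubbleAt n lam v x) := by
    rw [hBeq]; exact (convex_bubble lam v).vadd x
  have hBfin : volume (bubbleAt n lam v x) ≠ ⊤ := by
    rw [hBeq, measure_vadd (μ := (volume : Measure (V n))) x (bubble n lam v)]
    exact bubble_fin lam v
  have hxbar : x + (w + w) = reflMap νs x := by
    rw [reflMap]
    have h2 : ∀ j : Fin k, (2 * ⟪x, νs j⟫) • νs j
        = ⟪x, νs j⟫ • νs j + ⟪x, νs j⟫ • νs j := fun j => by rw [two_mul, add_smul]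
    simp only [h2, Finset.sum_add_distrib, hw]
    abel
  -- the reflected bubble has the same symmetric difference with E
  have hrefl : volume (E ∆ bubbleAt n lam v (reflMap νs x)) = volume (E ∆ bubbleAt n lam v x) := by
    have himg : reflMap νs '' (E ∆ bubbleAt n lam v x)
        = E ∆ bubbleAt n lam v (reflMap νs x) := by
      rw [Set.image_symmDiff (reflMap_involutive νs hunit horth).injective,
        reflMap_image_E νs horth E hsymm, reflMap_image_bubbleAt νs hunit horth hperp]
    have h := volume_reflMap_image νs hunit horth (hE.symmDiff hBmeas)
    rw [himg] at h
    exact h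
  calc (⨅ y : {y : V n // y ∈ hyp n ∧ ∀ j, ⟪y, νs j⟫ = 0},
        volume (E ∆ bubbleAt n lam v (y : V n)))
      ≤ volume (E ∆ bubbleAt n lam v (x + w)) :=
        iInf_le (fun y : {y : V n // y ∈ hyp n ∧ ∀ j, ⟪y, νs j⟫ = 0} =>
            volume (E ∆ bubbleAt n lam v (y : V n))) ⟨x + w, hpHyp, hpOrth⟩
    _ ≤ volume (E ∆ bubbleAt n lam v x)
        + volume (bubbleAt n lam v x ∆ bubbleAt n lam v (x + w)) :=
        measure_symmDiff_le E (bubbleAt n lam v x) (bubbleAt n lam v (x + w))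
    _ ≤ volume (E ∆ bubbleAt n lam v x)
        + volume (bubbleAt n lam v x ∆ bubbleAt n lam v (x + (w + w))) := by
        gcongr ?_ + ?_
        · exact le_rfl
        · rw [← vadd_bubbleAt lam v w x, ← vadd_bubbleAt lam v (w + w) x]
          exact symmDiff_vadd_le hBmeas hBconv hBfin w
    _ ≤ volume (E ∆ bubbleAt n lam v x)
        + (volume (bubbleAt n lam v x ∆ E)
          + volume (E ∆ bubbleAt n lam v (x + (w + w)))) := by
        gcongr ?_ + ?_
        · exact le_rfl
        · exact measure_symmDiff_le (bubbleAt n lam v x) E (bubbleAt n lam v (x + (w + w)))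
    _ = 3 * volume (E ∆ bubbleAt n lam v x) := by
        rw [symmDiff_comm (bubbleAt n lam v x) E, hxbar, hrefl]
        ring
end

section
/- (One-dimensional truncation estimate) Set r_λ = min{√(1-λ²), 1-λ} and R_λ = max{√(1-λ²), 1-λ}. There exists ĉ = ĉ(n,λ) > 0 such that for every 1-dimensional set of locally finite perimeter E ⊂ [0,∞) with |E| < ∞ and every l with (7/8) r_λ ≤ l ≤ (9/8) R_λ, one has ∫_{E Δ [0,l]} t^{n-1} dt ≤ ĉ ( ∫_{[0, r_λ/2] \ E} t^{n-1} dt + ∫_{∂*E} t^{n-1} |l - t| dH⁰(t) ). -/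
open MeasureTheory Metric Set Filter Topology
open scoped ENNReal NNReal RealInnerProductSpace symmDiff

/-- The essential (reduced) boundary of a one-dimensional set. -/
def redBdry1 (E : Set ℝ) : Set ℝ :=
  {x | ¬ Tendsto (fun r : ℝ => volume (E ∩ ball x r) / volume (ball x r))
        (nhdsWithin (0 : ℝ) (Set.Ioi 0)) (nhds (0 : ℝ≥0∞)) ∧
      ¬ Tendsto (fun r : ℝ => volume (E ∩ ball x r) / volume (ball x r))
        (nhdsWithin (0 : ℝ) (Set.Ioi 0)) (nhds (1 : ℝ≥0∞))}
private lemma ioc_disj (x y z : ℝ) : Disjoint (Set.Ioc x y) (Set.Ioc y z) := by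
  apply Set.disjoint_left.mpr
  rintro t ⟨_, h2⟩ ⟨h3, _⟩
  exact absurd h3 (not_lt.mpr h2)

lemma key_dichotomy (E : Set ℝ) (hE : MeasurableSet E) {a b : ℝ} (hab : a < b)
    (hno : ∀ x ∈ Set.Ioo a b, x ∉ redBdry1 E) :
    volume (E ∩ Set.Ioo a b) = 0 ∨ volume (Set.Ioo a b \ E) = 0 := by
  by_contra hcon
  push_neg at hcon
  obtain ⟨h1, h2⟩ := hcon
  obtain ⟨ν, hν⟩ : ∃ ν : Measure ℝ, ν = volume.restrict E := ⟨_, rfl⟩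
  have hνfin : ∀ x y : ℝ, ν (Set.Ioc x y) ≠ ⊤ := by
    intro x y
    rw [hν]
    refine (lt_of_le_of_lt (Measure.restrict_apply_le _ _) ?_).ne
    rw [Real.volume_Ioc]
    exact ENNReal.ofReal_lt_top
  obtain ⟨f, hf⟩ : ∃ f : ℝ → ℝ, ∀ x, f x = (ν (Set.Ioc a x)).toReal := ⟨_, fun _ => rfl⟩
  have hincr : ∀ x y : ℝ, a ≤ x → x ≤ y → f y = f x + (ν (Set.Ioc x y)).toReal := by
    intro x y hax hxy
    have hsplit : Set.Ioc a x ∪ Set.Ioc x y = Set.Ioc a y := Set.Ioc_union_Ioc_eq_Ioc hax hxy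
    have hm := measure_union (μ := ν) (ioc_disj a x y) measurableSet_Ioc
    rw [hf, hf, ← hsplit, hm, ENNReal.toReal_add (hνfin _ _) (hνfin _ _)]
  have hub : ∀ x y : ℝ, x ≤ y → (ν (Set.Ioc x y)).toReal ≤ y - x := by
    intro x y hxy
    have h : ν (Set.Ioc x y) ≤ volume (Set.Ioc x y) := by
      rw [hν]; exact Measure.restrict_apply_le E (Set.Ioc x y)
    have h' := ENNReal.toReal_mono (by rw [Real.volume_Ioc]; exact ENNReal.ofReal_ne_top) h
    rwa [Real.volume_Ioc, ENNReal.toReal_ofReal (by linarith)] at h'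
  have hfc : ContinuousOn f (Set.Icc a b) := by
    have hlip : LipschitzOnWith 1 f (Set.Icc a b) := by
      rw [lipschitzOnWith_iff_dist_le_mul]
      intro x hx y hy
      rw [Real.dist_eq, Real.dist_eq, NNReal.coe_one, one_mul]
      rcases le_total x y with h | h
      · have e := hincr x y hx.1 h
        have u1 := hub x y h
        have nn : (0:ℝ) ≤ (ν (Set.Ioc x y)).toReal := ENNReal.toReal_nonneg
        have e1 : |f x - f y| = f y - f x := by
          rw [abs_sub_comm, abs_of_nonneg (show (0:ℝ) ≤ f y - f x by linarith)]
        have e2 : |x - y| = y - x := by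
          rw [abs_sub_comm, abs_of_nonneg (show (0:ℝ) ≤ y - x by linarith)]
        rw [e1, e2]; linarith
      · have e := hincr y x hy.1 h
        have u1 := hub y x h
        have nn : (0:ℝ) ≤ (ν (Set.Ioc y x)).toReal := ENNReal.toReal_nonneg
        have e1 : |f x - f y| = f x - f y := abs_of_nonneg (by linarith)
        have e2 : |x - y| = x - y := abs_of_nonneg (by linarith)
        rw [e1, e2]; linarith
    exact hlip.continuousOn
  have hrestr : ∀ s : Set ℝ, MeasurableSet s → ν s = volume (s ∩ E) := by
    intro s hs; rw [hν]; exact Measure.restrict_apply hs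
  have hT0 : ν (Set.Ioc a b) ≠ 0 := by
    intro h0
    apply h1
    refine measure_mono_null (fun t ht => ?_) (?_ : volume (Set.Ioc a b ∩ E) = 0)
    · exact ⟨⟨ht.2.1, ht.2.2.le⟩, ht.1⟩
    · rw [← hrestr _ measurableSet_Ioc]; exact h0
  have hTfin := hνfin a b
  have hTlt : (ν (Set.Ioc a b)).toReal < b - a := by
    have hdisj : Disjoint (Set.Ioc a b ∩ E) (Set.Ioo a b \ E) := by
      apply Set.disjoint_left.mpr
      rintro t ⟨_, ht2⟩ ⟨_, ht3⟩
      exact ht3 ht2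
    have hun : volume ((Set.Ioc a b ∩ E) ∪ (Set.Ioo a b \ E))
        = volume (Set.Ioc a b ∩ E) + volume (Set.Ioo a b \ E) :=
      measure_union hdisj (measurableSet_Ioo.diff hE)
    have hsub2 : (Set.Ioc a b ∩ E) ∪ (Set.Ioo a b \ E) ⊆ Set.Ioc a b := by
      rintro t (ht | ht)
      · exact ht.1
      · exact ⟨ht.1.1, ht.1.2.le⟩
    have hle : volume (Set.Ioc a b ∩ E) + volume (Set.Ioo a b \ E) ≤ ENNReal.ofReal (b - a) := by
      rw [← hun, ← Real.volume_Ioc]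
      exact measure_mono hsub2
    have hdfin : volume (Set.Ioo a b \ E) ≠ ⊤ := by
      refine (lt_of_le_of_lt (measure_mono Set.diff_subset) ?_).ne
      rw [Real.volume_Ioo]; exact ENNReal.ofReal_lt_top
    have hTv : ν (Set.Ioc a b) = volume (Set.Ioc a b ∩ E) := hrestr _ measurableSet_Ioc
    have htr : (ν (Set.Ioc a b)).toReal + (volume (Set.Ioo a b \ E)).toReal ≤ b - a := by
      have h' := ENNReal.toReal_mono ENNReal.ofReal_ne_top hle
      rw [ENNReal.toReal_add (hTv ▸ hTfin) hdfin] at h'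
      rwa [ENNReal.toReal_ofReal (by linarith), ← hTv] at h'
    have : 0 < (volume (Set.Ioo a b \ E)).toReal := ENNReal.toReal_pos h2 hdfin
    linarith
  have hba : (0:ℝ) < b - a := by linarith
  obtain ⟨θ, hθeq⟩ : ∃ θ : ℝ, θ = (ν (Set.Ioc a b)).toReal / (b - a) := ⟨_, rfl⟩
  have hθ0 : 0 < θ := by rw [hθeq]; exact div_pos (ENNReal.toReal_pos hT0 hTfin) hba
  have hθ1 : θ < 1 := by rw [hθeq]; exact (div_lt_one hba).mpr hTlt
  obtain ⟨g, hgf⟩ : ∃ g : ℝ → ℝ, ∀ x, g x = f x - θ * (x - a) := ⟨_, fun _ => rfl⟩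
  have hga : g a = 0 := by rw [hgf, hf, Set.Ioc_self]; simp
  have hgb : g b = 0 := by
    rw [hgf, hf]
    have : θ * (b - a) = (ν (Set.Ioc a b)).toReal := by rw [hθeq]; field_simp
    rw [this]; ring
  have hgc : ContinuousOn g (Set.Icc a b) := by
    have : g = fun x => f x - θ * (x - a) := funext hgf
    rw [this]
    exact hfc.sub ((continuous_const.mul (continuous_id.sub continuous_const)).continuousOn)
  obtain ⟨xM, hxMmem, hxMmax⟩ :=
    isCompact_Icc.exists_isMaxOn (Set.nonempty_Icc.mpr hab.le) hgc
  obtain ⟨xm, hxmmem, hxmmin⟩ :=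
    isCompact_Icc.exists_isMinOn (Set.nonempty_Icc.mpr hab.le) hgc
  have hmaxle : ∀ y ∈ Set.Icc a b, g y ≤ g xM := fun y hy => hxMmax hy
  have hminle : ∀ y ∈ Set.Icc a b, g xm ≤ g y := fun y hy => hxmmin hy
  have hkey : ∃ x₀ ∈ Set.Ioo a b,
      (∀ y ∈ Set.Icc a b, g y ≤ g x₀) ∨ (∀ y ∈ Set.Icc a b, g x₀ ≤ g y) := by
    by_cases hM : 0 < g xM
    · refine ⟨xM, ⟨?_, ?_⟩, Or.inl hmaxle⟩
      · rcases eq_or_lt_of_le hxMmem.1 with e | h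
        · exfalso; rw [← e] at hM; linarith
        · exact h
      · rcases eq_or_lt_of_le hxMmem.2 with e | h
        · exfalso; rw [e] at hM; linarith
        · exact h
    · by_cases hm : g xm < 0
      · refine ⟨xm, ⟨?_, ?_⟩, Or.inr hminle⟩
        · rcases eq_or_lt_of_le hxmmem.1 with e | h
          · exfalso; rw [← e] at hm; linarith
          · exact h
        · rcases eq_or_lt_of_le hxmmem.2 with e | h
          · exfalso; rw [e] at hm; linarith
          · exact h
      · push_neg at hM hm
        refine ⟨(a + b) / 2, ⟨by linarith, by linarith⟩, Or.inl fun y hy => ?_⟩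
        have hy1 := hmaxle y hy
        have hy2 := hminle ((a + b) / 2) ⟨by linarith, by linarith⟩
        linarith
  obtain ⟨x₀, hx₀, hcase⟩ := hkey
  obtain ⟨ρ, hρdef⟩ : ∃ ρ : ℝ, ρ = min (x₀ - a) (b - x₀) := ⟨_, rfl⟩
  have hρa : ρ ≤ x₀ - a := hρdef ▸ min_le_left _ _
  have hρb : ρ ≤ b - x₀ := hρdef ▸ min_le_right _ _
  have hρ : 0 < ρ := hρdef ▸ lt_min (by linarith [hx₀.1]) (by linarith [hx₀.2])
  have hΔ : ∀ r : ℝ, 0 < r → r < ρ →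
      θ * r ≤ f (x₀ + r) - f (x₀ - r) ∧ f (x₀ + r) - f (x₀ - r) ≤ (1 + θ) * r := by
    intro r hr hrρ
    have h1 : a ≤ x₀ - r := by linarith
    have h2 : x₀ + r ≤ b := by linarith
    have e1 := hincr (x₀ - r) x₀ h1 (by linarith)
    have e2 := hincr x₀ (x₀ + r) (by linarith [hx₀.1]) (by linarith)
    have u1 := hub (x₀ - r) x₀ (by linarith)
    have u2 := hub x₀ (x₀ + r) (by linarith)
    have n1 : (0:ℝ) ≤ (ν (Set.Ioc (x₀ - r) x₀)).toReal := ENNReal.toReal_nonneg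
    have n2 : (0:ℝ) ≤ (ν (Set.Ioc x₀ (x₀ + r))).toReal := ENNReal.toReal_nonneg
    have mem0 : x₀ ∈ Set.Icc a b := ⟨hx₀.1.le, hx₀.2.le⟩
    have mem1 : x₀ - r ∈ Set.Icc a b := ⟨h1, by linarith⟩
    have mem2 : x₀ + r ∈ Set.Icc a b := ⟨by linarith [hx₀.1], h2⟩
    rcases hcase with hmax | hmin
    · have g1 := hmax _ mem2
      have g2 := hmax _ mem1
      rw [hgf, hgf] at g1 g2
      constructor <;> nlinarith [g1, g2, e1, e2, u1, u2, n1, n2]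
    · have g1 := hmin _ mem2
      have g2 := hmin _ mem1
      rw [hgf, hgf] at g1 g2
      constructor <;> nlinarith [g1, g2, e1, e2, u1, u2, n1, n2]
  have hmem : ∀ r ∈ Set.Ioo (0:ℝ) ρ,
      ENNReal.ofReal (θ/2) ≤ volume (E ∩ ball x₀ r) / volume (ball x₀ r) ∧
      volume (E ∩ ball x₀ r) / volume (ball x₀ r) ≤ ENNReal.ofReal ((1+θ)/2) := by
    intro r hr
    obtain ⟨hΔl, hΔu⟩ := hΔ r hr.1 hr.2
    have h1 : a ≤ x₀ - r := by linarith [hr.2]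
    have hball : ball x₀ r = Set.Ioo (x₀ - r) (x₀ + r) := Real.ball_eq_Ioo x₀ r
    have hvol : volume (Set.Ioo (x₀ - r) (x₀ + r)) = ENNReal.ofReal (2 * r) := by
      rw [Real.volume_Ioo]; congr 1; ring
    have hEIoo : volume (E ∩ Set.Ioo (x₀ - r) (x₀ + r))
        = ENNReal.ofReal (f (x₀ + r) - f (x₀ - r)) := by
      have key : volume (E ∩ Set.Ioo (x₀ - r) (x₀ + r)) = ν (Set.Ioc (x₀ - r) (x₀ + r)) := by
        rw [hrestr _ measurableSet_Ioc]
        apply le_antisymm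
        · exact measure_mono (fun t ht => ⟨⟨ht.2.1, ht.2.2.le⟩, ht.1⟩)
        · calc volume (Set.Ioc (x₀ - r) (x₀ + r) ∩ E)
              ≤ volume ((E ∩ Set.Ioo (x₀ - r) (x₀ + r)) ∪ {x₀ + r}) := by
                apply measure_mono
                rintro t ⟨⟨ht1, ht2⟩, htE⟩
                rcases eq_or_lt_of_le ht2 with e | h
                · exact Or.inr (by simp [e])
                · exact Or.inl ⟨htE, ht1, h⟩
            _ ≤ volume (E ∩ Set.Ioo (x₀ - r) (x₀ + r)) + volume ({x₀ + r} : Set ℝ) :=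
                measure_union_le _ _
            _ = volume (E ∩ Set.Ioo (x₀ - r) (x₀ + r)) := by
                rw [Real.volume_singleton, add_zero]
      have h5 := hincr (x₀ - r) (x₀ + r) h1 (by linarith [hr.1])
      have h6 : (ν (Set.Ioc (x₀ - r) (x₀ + r))).toReal = f (x₀ + r) - f (x₀ - r) := by linarith
      rw [key, ← h6, ENNReal.ofReal_toReal (hνfin _ _)]
    rw [hball, hEIoo, hvol]
    constructor
    · have he : ENNReal.ofReal (θ/2) = ENNReal.ofReal (θ * r) / ENNReal.ofReal (2 * r) := by
        rw [← ENNReal.ofReal_div_of_pos (by linarith [hr.1])]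
        congr 1
        have hrne : r ≠ 0 := hr.1.ne'
        field_simp
      rw [he]
      exact ENNReal.div_le_div_right (ENNReal.ofReal_le_ofReal hΔl) _
    · have he : ENNReal.ofReal ((1+θ)/2) = ENNReal.ofReal ((1+θ) * r) / ENNReal.ofReal (2 * r) := by
        rw [← ENNReal.ofReal_div_of_pos (by linarith [hr.1])]
        congr 1
        have hrne : r ≠ 0 := hr.1.ne'
        field_simp
      rw [he]
      exact ENNReal.div_le_div_right (ENNReal.ofReal_le_ofReal hΔu) _
  have hev : ∀ᶠ r in nhdsWithin (0:ℝ) (Set.Ioi 0),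
      ENNReal.ofReal (θ/2) ≤ volume (E ∩ ball x₀ r) / volume (ball x₀ r) ∧
      volume (E ∩ ball x₀ r) / volume (ball x₀ r) ≤ ENNReal.ofReal ((1+θ)/2) :=
    Filter.eventually_of_mem (Ioo_mem_nhdsGT hρ) hmem
  have hnx := hno x₀ hx₀
  simp only [redBdry1, Set.mem_setOf_eq, not_and, not_not] at hnx
  by_cases hten : Tendsto (fun r : ℝ => volume (E ∩ ball x₀ r) / volume (ball x₀ r))
      (nhdsWithin (0:ℝ) (Set.Ioi 0)) (nhds (0 : ℝ≥0∞))
  · have hlt := hten.eventually_lt_const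
      (show (0:ℝ≥0∞) < ENNReal.ofReal (θ/2) from ENNReal.ofReal_pos.mpr (by linarith))
    obtain ⟨r, hr1, hr2⟩ := (hev.and hlt).exists
    exact absurd hr1.1 (not_le.mpr hr2)
  · have hten1 := hnx hten
    have hlt := hten1.eventually_const_lt
      (show ENNReal.ofReal ((1+θ)/2) < 1 from by
        rw [← ENNReal.ofReal_one]
        exact (ENNReal.ofReal_lt_ofReal_iff (by norm_num)).mpr (by linarith))
    obtain ⟨r, hr1, hr2⟩ := (hev.and hlt).exists
    exact absurd hr1.2 (not_le.mpr hr2)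

lemma tail_null (E : Set ℝ) (hE : MeasurableSet E) (hfin : volume E ≠ ⊤) (l' : ℝ)
    (hno : ∀ x ∈ Set.Ioi l', x ∉ redBdry1 E) : volume (E ∩ Set.Ioi l') = 0 := by
  have hM : ∀ M : ℝ, volume (E ∩ Set.Ioo l' M) = 0 := by
    by_contra hc
    push_neg at hc
    obtain ⟨M, hMne⟩ := hc
    have hlM : l' < M := by
      by_contra h
      push_neg at h
      rw [Set.Ioo_eq_empty (by exact fun hh => absurd (lt_of_lt_of_le hh h) (lt_irrefl l'))] at hMne
      simp at hMne
    have hco : ∀ M' : ℝ, M ≤ M' → volume (Set.Ioo l' M' \ E) = 0 := by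
      intro M' hMM'
      rcases key_dichotomy E hE (lt_of_lt_of_le hlM hMM')
          (fun x hx => hno x (Set.mem_Ioi.mpr hx.1)) with h | h
      · exact absurd (measure_mono_null
          (Set.inter_subset_inter_right E (Set.Ioo_subset_Ioo le_rfl hMM')) h) hMne
      · exact h
    obtain ⟨M', hM1, hM2⟩ : ∃ M' : ℝ, M ≤ M' ∧ (volume E).toReal + l' + 1 ≤ M' :=
      ⟨max M ((volume E).toReal + l' + 1), le_max_left _ _, le_max_right _ _⟩
    have hvol : volume (E ∩ Set.Ioo l' M') = ENNReal.ofReal (M' - l') := by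
      have := measure_inter_add_diff (μ := volume) (Set.Ioo l' M') hE
      rw [hco M' hM1, add_zero] at this
      rw [Set.inter_comm, this, Real.volume_Ioo]
    have hle : ENNReal.ofReal (M' - l') ≤ volume E :=
      hvol ▸ measure_mono Set.inter_subset_left
    have := ENNReal.toReal_mono hfin hle
    rw [ENNReal.toReal_ofReal (by linarith [ENNReal.toReal_nonneg (a := volume E)])] at this
    linarith [ENNReal.toReal_nonneg (a := volume E)]
  have hun : E ∩ Set.Ioi l' ⊆ ⋃ k : ℕ, E ∩ Set.Ioo l' (l' + 1 + k) := by
    intro t ht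
    obtain ⟨k, hk⟩ := exists_nat_gt (t - l' - 1)
    exact Set.mem_iUnion.mpr ⟨k, ht.1, ht.2, by push_cast; linarith [Set.mem_Ioi.mp ht.2]⟩
  exact measure_mono_null hun (measure_iUnion_null fun k => hM _)

lemma singleton_le_count (f : ℝ → ℝ≥0∞) (S : Set ℝ) {u : ℝ} (hu : u ∈ S) :
    f u ≤ ∫⁻ t in S, f t ∂Measure.count := by
  calc f u = ∫⁻ t in {u}, f t ∂Measure.count := by
        rw [lintegral_singleton, Measure.count_singleton, mul_one]
    _ ≤ _ := lintegral_mono_set (Set.singleton_subset_iff.mpr hu)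

lemma far_bound (p : ℕ) (E : Set ℝ) (hE : MeasurableSet E) (hfin : volume E ≠ ⊤)
    (l : ℝ) (hl : 0 < l) :
    ∀ (k : ℕ) (l' : ℝ), l ≤ l' → ∀ (hS : (redBdry1 E ∩ Set.Ioi l').Finite),
      hS.toFinset.card ≤ k →
      ∫⁻ t in E ∩ Set.Ioi l', ENNReal.ofReal (t ^ p) ≤
        ∫⁻ t in redBdry1 E ∩ Set.Ioi l', ENNReal.ofReal (t ^ p * |l - t|) ∂Measure.count := by
  intro k
  induction k with
  | zero =>
    intro l' hll' hS hcard
    have he : redBdry1 E ∩ Set.Ioi l' = ∅ := by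
      rw [← Set.Finite.toFinset_eq_empty (h := hS)]
      exact Finset.card_eq_zero.mp (Nat.le_antisymm hcard (Nat.zero_le _))
    have h0 : volume (E ∩ Set.Ioi l') = 0 :=
      tail_null E hE hfin l' (fun x hx hmem =>
        Set.eq_empty_iff_forall_notMem.mp he x ⟨hmem, hx⟩)
    rw [Measure.restrict_eq_zero.mpr h0, lintegral_zero_measure]
    exact zero_le
  | succ k ih =>
    intro l' hll' hS hcard
    rcases Set.eq_empty_or_nonempty (redBdry1 E ∩ Set.Ioi l') with he | hne
    · have h0 : volume (E ∩ Set.Ioi l') = 0 :=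
        tail_null E hE hfin l' (fun x hx hmem =>
          Set.eq_empty_iff_forall_notMem.mp he x ⟨hmem, hx⟩)
      rw [Measure.restrict_eq_zero.mpr h0, lintegral_zero_measure]
      exact zero_le
    · have hFne : hS.toFinset.Nonempty := by rwa [Set.Finite.toFinset_nonempty]
      obtain ⟨u, hudef⟩ : ∃ u : ℝ, u = hS.toFinset.min' hFne := ⟨_, rfl⟩
      have huS : u ∈ redBdry1 E ∩ Set.Ioi l' := by
        rw [← Set.Finite.mem_toFinset hS, hudef]
        exact Finset.min'_mem _ _
      have hul' : l' < u := huS.2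
      have hmin : ∀ s ∈ redBdry1 E ∩ Set.Ioi l', u ≤ s := fun s hs => by
        rw [hudef]; exact hS.toFinset.min'_le s (hS.mem_toFinset.mpr hs)
      have hsplit : redBdry1 E ∩ Set.Ioi u = (redBdry1 E ∩ Set.Ioi l') \ {u} := by
        ext s
        constructor
        · rintro ⟨hs1, hs2⟩
          exact ⟨⟨hs1, lt_trans hul' hs2⟩, fun h => absurd (Set.mem_singleton_iff.mp h ▸ hs2)
            (lt_irrefl u)⟩
        · rintro ⟨⟨hs1, hs2⟩, hs3⟩
          exact ⟨hs1, lt_of_le_of_ne (hmin s ⟨hs1, hs2⟩)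
            (fun h => hs3 (Set.mem_singleton_iff.mpr h.symm))⟩
      have hSu : (redBdry1 E ∩ Set.Ioi u).Finite :=
        hS.subset (by rw [hsplit]; exact Set.diff_subset)
      have hcard' : hSu.toFinset.card ≤ k := by
        have heq : hSu.toFinset = hS.toFinset.erase u := by
          ext s
          simp only [Set.Finite.mem_toFinset, Finset.mem_erase, hsplit, Set.mem_diff,
            Set.mem_singleton_iff]
          tauto
        rw [heq]
        have := Finset.card_erase_of_mem (hS.mem_toFinset.mpr huS)
        omega
      have hsubset : E ∩ Set.Ioi l' ⊆ (Set.Ioo l' u ∪ {u}) ∪ (E ∩ Set.Ioi u) := by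
        rintro t ⟨htE, htl⟩
        rcases lt_trichotomy t u with h | h | h
        · exact Or.inl (Or.inl ⟨htl, h⟩)
        · exact Or.inl (Or.inr h)
        · exact Or.inr ⟨htE, h⟩
      have hu0 : (0:ℝ) < u := lt_of_le_of_lt hll' hul' |>.trans_le' hl.le
      have hIoo : ∫⁻ t in Set.Ioo l' u, ENNReal.ofReal (t ^ p) ≤
          ENNReal.ofReal (u ^ p * |l - u|) := by
        calc ∫⁻ t in Set.Ioo l' u, ENNReal.ofReal (t ^ p)
            ≤ ∫⁻ _ in Set.Ioo l' u, ENNReal.ofReal (u ^ p) :=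
              setLIntegral_mono' measurableSet_Ioo (fun t ht => ENNReal.ofReal_le_ofReal
                (pow_le_pow_left₀ (by linarith [ht.1, Set.mem_Ioo.mp ht |>.1]) ht.2.le _))
          _ = ENNReal.ofReal (u ^ p) * volume (Set.Ioo l' u) := setLIntegral_const _ _
          _ = ENNReal.ofReal (u ^ p) * ENNReal.ofReal (u - l') := by rw [Real.volume_Ioo]
          _ ≤ ENNReal.ofReal (u ^ p) * ENNReal.ofReal (u - l) :=
              mul_le_mul_right (ENNReal.ofReal_le_ofReal (by linarith)) _
          _ = ENNReal.ofReal (u ^ p * |l - u|) := by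
              rw [← ENNReal.ofReal_mul (by positivity)]
              congr 1
              rw [abs_sub_comm, abs_of_nonneg (by linarith)]
      have hsing : ∫⁻ t in ({u} : Set ℝ), ENNReal.ofReal (t ^ p) = 0 := by
        rw [lintegral_singleton, Real.volume_singleton, mul_zero]
      calc ∫⁻ t in E ∩ Set.Ioi l', ENNReal.ofReal (t ^ p)
          ≤ ∫⁻ t in (Set.Ioo l' u ∪ {u}) ∪ (E ∩ Set.Ioi u), ENNReal.ofReal (t ^ p) :=
            lintegral_mono_set hsubset
        _ ≤ (∫⁻ t in Set.Ioo l' u ∪ {u}, ENNReal.ofReal (t ^ p)) +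
            ∫⁻ t in E ∩ Set.Ioi u, ENNReal.ofReal (t ^ p) := lintegral_union_le _ _ _
        _ ≤ ((∫⁻ t in Set.Ioo l' u, ENNReal.ofReal (t ^ p)) +
            ∫⁻ t in ({u} : Set ℝ), ENNReal.ofReal (t ^ p)) +
            ∫⁻ t in E ∩ Set.Ioi u, ENNReal.ofReal (t ^ p) :=
            add_le_add_left (lintegral_union_le _ _ _) _
        _ ≤ (ENNReal.ofReal (u ^ p * |l - u|) + 0) +
            ∫⁻ t in redBdry1 E ∩ Set.Ioi u, ENNReal.ofReal (t ^ p * |l - t|) ∂Measure.count :=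
            add_le_add (add_le_add hIoo hsing.le) (ih u (hll'.trans hul'.le) hSu hcard')
        _ = ∫⁻ t in (redBdry1 E ∩ Set.Ioi u) ∪ {u},
              ENNReal.ofReal (t ^ p * |l - t|) ∂Measure.count := by
            rw [lintegral_union (measurableSet_singleton u)
              (Set.disjoint_singleton_right.mpr (fun h => lt_irrefl u h.2))]
            rw [lintegral_singleton, Measure.count_singleton, mul_one, add_zero, add_comm]
        _ = ∫⁻ t in redBdry1 E ∩ Set.Ioi l',
              ENNReal.ofReal (t ^ p * |l - t|) ∂Measure.count := by
            rw [hsplit, Set.diff_union_of_subset (Set.singleton_subset_iff.mpr huS)]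


set_option maxHeartbeats 2000000 in
/-- (One-dimensional truncation estimate) With
`r_λ = min{√(1-λ²), 1-λ}` and `R_λ = max{√(1-λ²), 1-λ}`, there is `ĉ = ĉ(n,λ) > 0` such that
for every one-dimensional set `E ⊆ [0,∞)` of locally finite perimeter with `|E| < ∞` and
every `l ∈ [(7/8) r_λ, (9/8) R_λ]`,
`∫_{E Δ [0,l]} t^{n-1} dt ≤ ĉ ( ∫_{[0,r_λ/2] \ E} t^{n-1} dt + ∫_{∂*E} t^{n-1}|l-t| dH⁰ )`. -/
theorem one_dimensional_truncation_estimate (n : ℕ) (hn : 2 ≤ n)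
    (lam : ℝ) (hlam : lam ∈ Set.Ioo (-1 : ℝ) 1) :
    ∃ c : ℝ, 0 < c ∧ ∀ E : Set ℝ, MeasurableSet E → E ⊆ Set.Ici (0 : ℝ) →
      volume E ≠ ⊤ →
      -- `E` has locally finite perimeter in `(0,∞)`
      (∀ R : ℝ, (redBdry1 E ∩ Set.Icc 0 R).Finite) →
      ∀ l : ℝ, (7 / 8) * min (Real.sqrt (1 - lam ^ 2)) (1 - lam) ≤ l →
        l ≤ (9 / 8) * max (Real.sqrt (1 - lam ^ 2)) (1 - lam) →
        (∫⁻ t in E ∆ Set.Icc (0 : ℝ) l, ENNReal.ofReal (t ^ (n - 1)))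
          ≤ ENNReal.ofReal c *
            ((∫⁻ t in Set.Icc (0 : ℝ) (min (Real.sqrt (1 - lam ^ 2)) (1 - lam) / 2) \ E,
                ENNReal.ofReal (t ^ (n - 1)))
              + ∫⁻ t in redBdry1 E,
                  ENNReal.ofReal (t ^ (n - 1) * |l - t|) ∂Measure.count) := by
  obtain ⟨hs1, hs2⟩ := hlam
  have hsq0 : 0 < Real.sqrt (1 - lam ^ 2) := Real.sqrt_pos.mpr (by nlinarith)
  have hsq2 : Real.sqrt (1 - lam ^ 2) ≤ 2 := by
    have h4 : Real.sqrt (1 - lam ^ 2) ≤ Real.sqrt 4 := Real.sqrt_le_sqrt (by nlinarith)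
    have h42 : Real.sqrt 4 = 2 := by
      rw [show (4:ℝ) = 2 ^ 2 by norm_num, Real.sqrt_sq (by norm_num)]
    linarith
  set r := min (Real.sqrt (1 - lam ^ 2)) (1 - lam) with hrdef
  have hr0 : 0 < r := lt_min hsq0 (by linarith)
  have hr2 : r ≤ 2 := le_trans (min_le_right _ _) (by linarith)
  have hRmax : max (Real.sqrt (1 - lam ^ 2)) (1 - lam) ≤ 2 := max_le hsq2 (by linarith)
  set m := r / 2 with hmdef
  have hm0 : 0 < m := by rw [hmdef]; linarith
  have hm1 : m ≤ 1 := by rw [hmdef]; linarith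
  have hm2nn : (0:ℝ) ≤ (m/2)^(n-1) := pow_nonneg (by linarith) _
  obtain ⟨K, hKdef⟩ : ∃ K : ℝ, K = (9/4 : ℝ) ^ (n-1) * (9/4) := ⟨_, rfl⟩
  obtain ⟨δ₀, hδ₀def⟩ : ∃ d : ℝ, d = (m/2)^(n-1) * (m/2) := ⟨_, rfl⟩
  obtain ⟨δ₁, hδ₁def⟩ : ∃ d : ℝ, d = (m/2)^(n-1) * (3*m/4) := ⟨_, rfl⟩
  obtain ⟨C₂, hC₂def⟩ : ∃ d : ℝ, d = (9/(4*m))^(n-1) := ⟨_, rfl⟩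
  have hK0 : 0 < K := by rw [hKdef]; positivity
  have hδ₀0 : 0 < δ₀ := by
    rw [hδ₀def]; exact mul_pos (pow_pos (by linarith) _) (by linarith)
  have hδ₁0 : 0 < δ₁ := by
    rw [hδ₁def]; exact mul_pos (pow_pos (by linarith) _) (by linarith)
  have hC₂0 : 0 < C₂ := by
    rw [hC₂def]; exact pow_pos (by positivity) _
  obtain ⟨c', hc'def⟩ : ∃ c' : ℝ, c' = 1 + K/δ₀ + K/δ₁ + C₂ := ⟨_, rfl⟩
  have hd0 : 0 ≤ K/δ₀ := div_nonneg hK0.le hδ₀0.le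
  have hd1 : 0 ≤ K/δ₁ := div_nonneg hK0.le hδ₁0.le
  have hc'1 : 1 ≤ c' := by rw [hc'def]; linarith
  have hc'd0 : K/δ₀ ≤ c' := by rw [hc'def]; linarith
  have hc'd1 : K/δ₁ ≤ c' := by rw [hc'def]; linarith
  have hc'C2 : C₂ ≤ c' := by rw [hc'def]; linarith
  refine ⟨1 + c', by linarith, ?_⟩
  intro E hE hEsub hEfin hreg l hl7 hl9
  have hl0 : 0 < l := lt_of_lt_of_le (by linarith) hl7
  have hlm : m < l := by
    have : 7/8 * r > m := by rw [hmdef]; linarith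
    linarith
  have hl94 : l ≤ 9/4 := le_trans hl9 (by linarith)
  have hlm34 : 3*m/4 ≤ l - m := by
    have h1 : 7/8 * r ≤ l := hl7
    rw [hmdef] at *
    linarith
  set T1 := ∫⁻ t in Set.Icc (0:ℝ) m \ E, ENNReal.ofReal (t ^ (n-1)) with hT1
  set T2 := ∫⁻ t in redBdry1 E, ENNReal.ofReal (t ^ (n-1) * |l - t|) ∂Measure.count with hT2
  have hpt : ∀ u, u ∈ redBdry1 E → u ≤ l → ENNReal.ofReal (u^(n-1) * (l - u)) ≤ T2 := by
    intro u hu hul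
    rw [hT2]
    have habs : ENNReal.ofReal (u^(n-1) * (l - u)) = ENNReal.ofReal (u^(n-1) * |l - u|) := by
      rw [abs_of_nonneg (show (0:ℝ) ≤ l - u by linarith)]
    rw [habs]
    exact singleton_le_count (fun t => ENNReal.ofReal (t^(n-1) * |l - t|)) (redBdry1 E) hu
  have hNK : ∫⁻ t in Set.Icc (0:ℝ) l \ E, ENNReal.ofReal (t^(n-1)) ≤ ENNReal.ofReal K := by
    calc ∫⁻ t in Set.Icc (0:ℝ) l \ E, ENNReal.ofReal (t^(n-1))
        ≤ ∫⁻ t in Set.Icc (0:ℝ) l, ENNReal.ofReal (t^(n-1)) := lintegral_mono_set Set.diff_subset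
      _ ≤ ∫⁻ _ in Set.Icc (0:ℝ) l, ENNReal.ofReal ((9/4:ℝ)^(n-1)) :=
          setLIntegral_mono' measurableSet_Icc (fun t ht => ENNReal.ofReal_le_ofReal
            (pow_le_pow_left₀ ht.1 (le_trans ht.2 hl94) _))
      _ = ENNReal.ofReal ((9/4:ℝ)^(n-1)) * volume (Set.Icc (0:ℝ) l) := setLIntegral_const _ _
      _ ≤ ENNReal.ofReal ((9/4:ℝ)^(n-1)) * ENNReal.ofReal (9/4) := by
          rw [Real.volume_Icc]
          exact mul_le_mul_right (ENNReal.ofReal_le_ofReal (by linarith)) _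
      _ = ENNReal.ofReal K := by rw [← ENNReal.ofReal_mul (by positivity), hKdef]
  by_cases hSfin : (redBdry1 E ∩ Set.Ioi l).Finite
  · -- main case
    have hNear : ∫⁻ t in Set.Icc (0:ℝ) l \ E, ENNReal.ofReal (t^(n-1))
        ≤ ENNReal.ofReal c' * (T1 + T2) := by
      rcases Set.eq_empty_or_nonempty (redBdry1 E ∩ Set.Ioc (m/2) m) with hc1 | hc1
      · -- no boundary point in (m/2, m]
        have hu : ∃ u : ℝ, m < u ∧ u ≤ l ∧ (∀ x ∈ Set.Ioo (m/2) u, x ∉ redBdry1 E) ∧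
            ENNReal.ofReal (l^(n-1) * (l - u)) ≤ ENNReal.ofReal C₂ * T2 := by
          rcases Set.eq_empty_or_nonempty (redBdry1 E ∩ Set.Ioc m l) with hml | hml
          · refine ⟨l, hlm, le_rfl, ?_, by simp⟩
            intro x hx hxS
            rcases le_or_gt x m with h | h
            · exact Set.eq_empty_iff_forall_notMem.mp hc1 x ⟨hxS, hx.1, h⟩
            · exact Set.eq_empty_iff_forall_notMem.mp hml x ⟨hxS, h, hx.2.le⟩
          · have hfinml : (redBdry1 E ∩ Set.Ioc m l).Finite :=
              (hreg l).subset (fun t ht => ⟨ht.1, ⟨le_trans hm0.le ht.2.1.le, ht.2.2⟩⟩)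
            have hne' : hfinml.toFinset.Nonempty := by rwa [Set.Finite.toFinset_nonempty]
            obtain ⟨u, hudef⟩ : ∃ u : ℝ, u = hfinml.toFinset.min' hne' := ⟨_, rfl⟩
            have huS : u ∈ redBdry1 E ∩ Set.Ioc m l := by
              rw [← Set.Finite.mem_toFinset hfinml, hudef]
              exact Finset.min'_mem _ _
            refine ⟨u, huS.2.1, huS.2.2, ?_, ?_⟩
            · intro x hx hxS
              rcases le_or_gt x m with h | h
              · exact Set.eq_empty_iff_forall_notMem.mp hc1 x ⟨hxS, hx.1, h⟩
              · have hxmem : x ∈ redBdry1 E ∩ Set.Ioc m l :=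
                  ⟨hxS, h, le_trans hx.2.le huS.2.2⟩
                have hge : u ≤ x := by
                  rw [hudef]; exact hfinml.toFinset.min'_le x (hfinml.mem_toFinset.mpr hxmem)
                linarith [hx.2]
            · have hul : u ≤ l := huS.2.2
              have hmu : m < u := huS.2.1
              have h1 : l^(n-1) * (l - u) ≤ C₂ * (u^(n-1) * (l - u)) := by
                have hlC : l^(n-1) ≤ C₂ * u^(n-1) := by
                  have hcalc : l ≤ 9/(4*m) * u := by
                    have h9 : (9:ℝ)/(4*m) * m = 9/4 := by field_simp
                    have h9nn : (0:ℝ) ≤ 9/(4*m) := by positivity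
                    nlinarith
                  calc l^(n-1) ≤ (9/(4*m) * u)^(n-1) :=
                        pow_le_pow_left₀ (by linarith) hcalc _
                    _ = C₂ * u^(n-1) := by rw [mul_pow, ← hC₂def]
                have hlu : (0:ℝ) ≤ l - u := by linarith
                calc l^(n-1) * (l - u) ≤ (C₂ * u^(n-1)) * (l - u) :=
                      mul_le_mul_of_nonneg_right hlC hlu
                  _ = C₂ * (u^(n-1) * (l - u)) := by ring
              calc ENNReal.ofReal (l^(n-1) * (l - u))
                  ≤ ENNReal.ofReal (C₂ * (u^(n-1) * (l - u))) := ENNReal.ofReal_le_ofReal h1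
                _ = ENNReal.ofReal C₂ * ENNReal.ofReal (u^(n-1) * (l - u)) :=
                    ENNReal.ofReal_mul hC₂0.le
                _ ≤ ENNReal.ofReal C₂ * T2 := mul_le_mul_right (hpt u huS.1 hul) _
        obtain ⟨u, hmu, hul, hnoS, hubound⟩ := hu
        rcases key_dichotomy E hE (show m/2 < u by linarith) hnoS with hnull | hconull
        · -- E essentially empty on (m/2, u) : T1 is big
          have hsub0 : E ∩ Set.Ioo (m/2) m ⊆ E ∩ Set.Ioo (m/2) u :=
            fun t ht => ⟨ht.1, ht.2.1, lt_trans ht.2.2 hmu⟩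
          have hnull2 : volume (E ∩ Set.Ioo (m/2) m) = 0 := measure_mono_null hsub0 hnull
          have hδ0T1 : ENNReal.ofReal δ₀ ≤ T1 := by
            have hae : (Set.Ioo (m/2) m \ E : Set ℝ) =ᵐ[volume] (Set.Ioo (m/2) m : Set ℝ) := by
              rw [MeasureTheory.sdiff_ae_eq_self, Set.inter_comm]
              exact hnull2
            calc ENNReal.ofReal δ₀
                = ENNReal.ofReal ((m/2)^(n-1)) * volume (Set.Ioo (m/2) m) := by
                  rw [Real.volume_Ioo, ← ENNReal.ofReal_mul hm2nn, hδ₀def]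
                  congr 1; ring
              _ = ∫⁻ _ in Set.Ioo (m/2) m, ENNReal.ofReal ((m/2)^(n-1)) :=
                  (setLIntegral_const _ _).symm
              _ ≤ ∫⁻ t in Set.Ioo (m/2) m, ENNReal.ofReal (t^(n-1)) :=
                  setLIntegral_mono' measurableSet_Ioo (fun t ht => ENNReal.ofReal_le_ofReal
                    (pow_le_pow_left₀ (by linarith) ht.1.le _))
              _ = ∫⁻ t in Set.Ioo (m/2) m \ E, ENNReal.ofReal (t^(n-1)) := by
                  rw [Measure.restrict_congr_set hae]
              _ ≤ T1 := by
                  rw [hT1]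
                  exact lintegral_mono_set
                    (fun t ht => ⟨⟨by linarith [ht.1.1], ht.1.2.le⟩, ht.2⟩)
          calc ∫⁻ t in Set.Icc (0:ℝ) l \ E, ENNReal.ofReal (t^(n-1))
              ≤ ENNReal.ofReal K := hNK
            _ = ENNReal.ofReal (K/δ₀) * ENNReal.ofReal δ₀ := by
                rw [← ENNReal.ofReal_mul hd0, div_mul_cancel₀ _ hδ₀0.ne']
            _ ≤ ENNReal.ofReal (K/δ₀) * T1 := mul_le_mul_right hδ0T1 _
            _ ≤ ENNReal.ofReal c' * (T1 + T2) :=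
                mul_le_mul' (ENNReal.ofReal_le_ofReal hc'd0) le_self_add
        · -- E essentially full on (m/2, u)
          have hdecomp : Set.Icc (0:ℝ) l \ E ⊆
              (Set.Icc (0:ℝ) m \ E) ∪ ((Set.Ioc m u \ E) ∪ (Set.Ioc u l \ E)) := by
            rintro t ⟨⟨ht0, htl⟩, htE⟩
            rcases le_or_gt t m with h | h
            · exact Or.inl ⟨⟨ht0, h⟩, htE⟩
            · rcases le_or_gt t u with h' | h'
              · exact Or.inr (Or.inl ⟨⟨h, h'⟩, htE⟩)
              · exact Or.inr (Or.inr ⟨⟨h', htl⟩, htE⟩)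
          have hmid : volume (Set.Ioc m u \ E) = 0 := by
            refine measure_mono_null (fun t ht => ?_)
              (measure_union_null hconull (Real.volume_singleton : volume {u} = 0))
            rcases eq_or_lt_of_le ht.1.2 with e | h4
            · exact Or.inr (by simp [e])
            · exact Or.inl ⟨⟨by linarith [ht.1.1], h4⟩, ht.2⟩
          have hend : ∫⁻ t in Set.Ioc u l \ E, ENNReal.ofReal (t^(n-1))
              ≤ ENNReal.ofReal C₂ * T2 := by
            refine le_trans ?_ hubound
            calc ∫⁻ t in Set.Ioc u l \ E, ENNReal.ofReal (t^(n-1))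
                ≤ ∫⁻ t in Set.Ioc u l, ENNReal.ofReal (t^(n-1)) :=
                  lintegral_mono_set Set.diff_subset
              _ ≤ ∫⁻ _ in Set.Ioc u l, ENNReal.ofReal (l^(n-1)) :=
                  setLIntegral_mono' measurableSet_Ioc (fun t ht => ENNReal.ofReal_le_ofReal
                    (pow_le_pow_left₀ (by linarith [ht.1]) ht.2 _))
              _ = ENNReal.ofReal (l^(n-1)) * volume (Set.Ioc u l) := setLIntegral_const _ _
              _ = ENNReal.ofReal (l^(n-1) * (l - u)) := by
                  rw [Real.volume_Ioc, ← ENNReal.ofReal_mul (by positivity)]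
          have h1le : (1:ℝ≥0∞) ≤ ENNReal.ofReal c' := by
            rw [← ENNReal.ofReal_one]
            exact ENNReal.ofReal_le_ofReal hc'1
          calc ∫⁻ t in Set.Icc (0:ℝ) l \ E, ENNReal.ofReal (t^(n-1))
              ≤ ∫⁻ t in (Set.Icc (0:ℝ) m \ E) ∪ ((Set.Ioc m u \ E) ∪ (Set.Ioc u l \ E)),
                  ENNReal.ofReal (t^(n-1)) := lintegral_mono_set hdecomp
            _ ≤ (∫⁻ t in Set.Icc (0:ℝ) m \ E, ENNReal.ofReal (t^(n-1))) +
                ∫⁻ t in (Set.Ioc m u \ E) ∪ (Set.Ioc u l \ E), ENNReal.ofReal (t^(n-1)) :=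
                lintegral_union_le _ _ _
            _ ≤ T1 + ((∫⁻ t in Set.Ioc m u \ E, ENNReal.ofReal (t^(n-1))) +
                ∫⁻ t in Set.Ioc u l \ E, ENNReal.ofReal (t^(n-1))) :=
                add_le_add (le_of_eq hT1.symm) (lintegral_union_le _ _ _)
            _ ≤ T1 + (0 + ENNReal.ofReal C₂ * T2) := by
                refine add_le_add_right (add_le_add ?_ hend) _
                rw [Measure.restrict_eq_zero.mpr hmid, lintegral_zero_measure]
            _ = T1 + ENNReal.ofReal C₂ * T2 := by rw [zero_add]
            _ ≤ ENNReal.ofReal c' * T1 + ENNReal.ofReal c' * T2 := by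
                refine add_le_add ?_ (mul_le_mul_left (ENNReal.ofReal_le_ofReal hc'C2) _)
                calc T1 = 1 * T1 := (one_mul _).symm
                  _ ≤ ENNReal.ofReal c' * T1 := mul_le_mul_left h1le _
            _ = ENNReal.ofReal c' * (T1 + T2) := (mul_add _ _ _).symm
      · -- there is a boundary point in (m/2, m]
        obtain ⟨s, hsS, hsm⟩ := hc1
        have hδ1T2 : ENNReal.ofReal δ₁ ≤ T2 := by
          refine le_trans ?_ (hpt s hsS (by linarith [hsm.2]))
          apply ENNReal.ofReal_le_ofReal
          have h1 : (m/2:ℝ)^(n-1) ≤ s^(n-1) := pow_le_pow_left₀ (by linarith) hsm.1.le _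
          have h2 : 3*m/4 ≤ l - s := by linarith [hsm.2]
          rw [hδ₁def]
          exact mul_le_mul h1 h2 (by linarith) (pow_nonneg (by linarith [hsm.1]) _)
        calc ∫⁻ t in Set.Icc (0:ℝ) l \ E, ENNReal.ofReal (t^(n-1))
            ≤ ENNReal.ofReal K := hNK
          _ = ENNReal.ofReal (K/δ₁) * ENNReal.ofReal δ₁ := by
              rw [← ENNReal.ofReal_mul hd1, div_mul_cancel₀ _ hδ₁0.ne']
          _ ≤ ENNReal.ofReal (K/δ₁) * T2 := mul_le_mul_right hδ1T2 _
          _ ≤ ENNReal.ofReal c' * (T1 + T2) :=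
              mul_le_mul' (ENNReal.ofReal_le_ofReal hc'd1) le_add_self
    have hFar : ∫⁻ t in E ∩ Set.Ioi l, ENNReal.ofReal (t^(n-1)) ≤ T2 := by
      refine le_trans
        (far_bound (n-1) E hE hEfin l hl0 hSfin.toFinset.card l le_rfl hSfin le_rfl) ?_
      rw [hT2]
      exact lintegral_mono_set Set.inter_subset_left
    have hsymm : E ∆ Set.Icc (0:ℝ) l ⊆ (Set.Icc (0:ℝ) l \ E) ∪ (E ∩ Set.Ioi l) := by
      rw [Set.symmDiff_def]
      rintro t (⟨ht1, ht2⟩ | ⟨ht1, ht2⟩)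
      · rcases le_or_gt t l with h | h
        · exact absurd ⟨hEsub ht1, h⟩ ht2
        · exact Or.inr ⟨ht1, h⟩
      · left; exact ⟨ht1, ht2⟩
    calc ∫⁻ t in E ∆ Set.Icc (0:ℝ) l, ENNReal.ofReal (t ^ (n-1))
        ≤ ∫⁻ t in (Set.Icc (0:ℝ) l \ E) ∪ (E ∩ Set.Ioi l), ENNReal.ofReal (t^(n-1)) :=
          lintegral_mono_set hsymm
      _ ≤ (∫⁻ t in Set.Icc (0:ℝ) l \ E, ENNReal.ofReal (t^(n-1))) +
          ∫⁻ t in E ∩ Set.Ioi l, ENNReal.ofReal (t^(n-1)) := lintegral_union_le _ _ _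
      _ ≤ ENNReal.ofReal c' * (T1 + T2) + T2 := add_le_add hNear hFar
      _ ≤ ENNReal.ofReal c' * (T1 + T2) + 1 * (T1 + T2) := by
          rw [one_mul]
          exact add_le_add_right le_add_self _
      _ = (ENNReal.ofReal c' + 1) * (T1 + T2) := (add_mul _ _ _).symm
      _ = ENNReal.ofReal (1 + c') * (T1 + T2) := by
          have he : ENNReal.ofReal c' + 1 = ENNReal.ofReal (1 + c') := by
            rw [← ENNReal.ofReal_one, ← ENNReal.ofReal_add (by linarith) zero_le_one, add_comm]
          rw [he]
  · -- infinitely many boundary points beyond l : RHS is infinite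
    have hinf2 : (redBdry1 E ∩ Set.Ioi (l+1)).Infinite := by
      intro hfin2
      apply hSfin
      refine ((hreg (l+1)).union hfin2).subset ?_
      rintro t ⟨h1, h2⟩
      rcases le_or_gt t (l+1) with h | h
      · exact Or.inl ⟨h1, le_of_lt (lt_trans hl0 h2), h⟩
      · exact Or.inr ⟨h1, h⟩
    obtain ⟨D, hDsub, hDc, hDinf⟩ : ∃ D : Set ℝ,
        D ⊆ redBdry1 E ∩ Set.Ioi (l+1) ∧ D.Countable ∧ D.Infinite := by
      refine ⟨Set.range (fun k : ℕ => ((Set.Infinite.natEmbedding _ hinf2) k : ℝ)), ?_,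
        Set.countable_range _, Set.infinite_range_of_injective ?_⟩
      · rintro t ⟨k, rfl⟩
        exact ((Set.Infinite.natEmbedding _ hinf2) k).2
      · exact Subtype.coe_injective.comp (Set.Infinite.natEmbedding _ hinf2).injective
    have hT2top : T2 = ⊤ := by
      refine top_le_iff.mp ?_
      have hone : ∀ t ∈ D, (1:ℝ≥0∞) ≤ ENNReal.ofReal (t^(n-1) * |l - t|) := by
        intro t ht
        obtain ⟨htS, htl⟩ := hDsub ht
        have htl' : l + 1 < t := htl
        have ht1 : (1:ℝ) ≤ t := by linarith
        have habs : |l - t| = t - l := by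
          rw [abs_sub_comm, abs_of_nonneg (by linarith)]
        rw [← ENNReal.ofReal_one]
        apply ENNReal.ofReal_le_ofReal
        have h2 : (1:ℝ) ≤ t^(n-1) := one_le_pow₀ ht1
        have h3 : (1:ℝ) ≤ t - l := by linarith
        rw [habs]; nlinarith
      calc (⊤:ℝ≥0∞) = 1 * Measure.count D := by
            rw [Measure.count_apply_infinite hDinf, one_mul]
        _ = ∫⁻ _ in D, (1:ℝ≥0∞) ∂Measure.count := (setLIntegral_const _ _).symm
        _ ≤ ∫⁻ t in D, ENNReal.ofReal (t^(n-1) * |l - t|) ∂Measure.count :=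
            setLIntegral_mono' hDc.measurableSet hone
        _ ≤ T2 := by
            rw [hT2]
            exact lintegral_mono_set (hDsub.trans Set.inter_subset_left)
    have htop : ENNReal.ofReal (1 + c') * (T1 + T2) = ⊤ := by
      rw [hT2top, add_top, ENNReal.mul_top
        ((ENNReal.ofReal_pos.mpr (by linarith)).ne')]
    rw [htop]
    exact le_top
end
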